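/- Let I ⊆ {0,…,m} be nonempty and satisfy: 1 ∈ I implies 0 ∈ I, and m−1 ∈ I implies m ∈ I. Then every element of W_{I,D_m} fixes the element (ω_I, 0) of F_{I,D_m}, and the induced map f : W̃_{D_m}/W_{I,D_m} → F_{I,D_m}, given by w·W_{I,D_m} ↦ w·(ω_I, 0), is a bijection. -/

import Mathlib

open Finset

namespace TypeD

abbrev VecZ (m : ℕ) := Fin (2 * m) → ℤ
abbrev VecR (m : ℕ) := Fin (2 * m) → ℝ

/-- `σ ∈ S_{2m}^∘`: even, and commuting with `j ↦ j*`. -/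
def InSO (m : ℕ) (σ : Equiv.Perm (Fin (2 * m))) : Prop :=
  Equiv.Perm.sign σ = 1 ∧ ∀ j, σ j.rev = (σ j).rev

/-- `t ∈ X_{*D_m}`. -/
def InXD (m : ℕ) (t : VecZ m) : Prop :=
  ∀ j j' : Fin (2 * m), t j + t j.rev = t j' + t j'.rev

/-- `ω_i ∈ ℤ^{2m}`: writing `i = 2m·b + c` with `0 ≤ c < 2m`, the first `c` entries
are `-b-1` and the rest are `-b`. -/
def omegaD (m : ℕ) (i : ℤ) (j : Fin (2 * m)) : ℤ :=
  if ((j : ℕ) : ℤ) < i % (2 * (m : ℤ)) then -(i / (2 * (m : ℤ))) - 1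
  else -(i / (2 * (m : ℤ)))

/-- `μ_k^w = w·ω_k − ω_k` for `w = t_t σ`. -/
def muD (m : ℕ) (t : VecZ m) (σ : Equiv.Perm (Fin (2 * m))) (k : ℤ) (j : Fin (2 * m)) : ℤ :=
  t j + omegaD m k (σ⁻¹ j) - omegaD m k j

/-- `ν_k^w = (μ_k^w + μ_{−k}^w)/2`, real-valued. -/
noncomputable def nuD (m : ℕ) (t : VecZ m) (σ : Equiv.Perm (Fin (2 * m))) (k : ℤ) (j : Fin (2 * m)) : ℝ :=
  ((muD m t σ k j + muD m t σ (-k) j : ℤ) : ℝ) / 2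

/-- `c_k^w = #{j : μ_k^w(j) = 2}`. -/
noncomputable def cD (m : ℕ) (t : VecZ m) (σ : Equiv.Perm (Fin (2 * m))) (k : ℤ) : ℕ :=
  Set.ncard {j : Fin (2 * m) | muD m t σ k j = 2}

/-- the cocharacter `μ = (2^{(q)}, 1^{(2m−2q)}, 0^{(q)})`. -/
def muQ (m q : ℕ) (j : Fin (2 * m)) : ℤ :=
  if (j : ℕ) < q then 2 else if (j : ℕ) < 2 * m - q then 1 else 0

/-- the coroot lattice `Q∨_{D_m}`. -/
def QveeD (m : ℕ) : Set (VecZ m) :=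
  {x | (∀ j, x j + x j.rev = 0) ∧
    Even (∑ j ∈ Finset.univ.filter (fun j : Fin (2 * m) => (j : ℕ) < m), x j)}

/-- `j ∈ A_a` (1-indexed `{1,…,a} ∪ {2m+1−a,…,2m}`). -/
def memA (m a : ℕ) (j : Fin (2 * m)) : Prop := (j : ℕ) < a ∨ 2 * m - a ≤ (j : ℕ)

/-- `j ∈ B_a` (1-indexed `{a+1,…,2m−a}`). -/
def memB (m a : ℕ) (j : Fin (2 * m)) : Prop := a ≤ (j : ℕ) ∧ (j : ℕ) < 2 * m - a

def IsIntVal (x : ℝ) : Prop := ∃ z : ℤ, x = (z : ℝ)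

/-- a half-integer: an element of `(1/2)ℤ ∖ ℤ`. -/
def IsHalfInt (x : ℝ) : Prop := (∃ z : ℤ, x = (z : ℝ) / 2) ∧ ¬ IsIntVal x

/-- `μ_k^w` is self-dual, i.e. `μ_k^w = μ_{−k}^w`. -/
def SelfDual (m : ℕ) (t : VecZ m) (σ : Equiv.Perm (Fin (2 * m))) (k : ℤ) : Prop :=
  ∀ j, muD m t σ k j = muD m t σ (-k) j

/-- (SP1) at `k`. -/
def SP1 (m : ℕ) (t : VecZ m) (σ : Equiv.Perm (Fin (2 * m))) (k : ℤ) : Prop :=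
  (∀ j, muD m t σ k j + muD m t σ (-k) j.rev = 2) ∧
  (∀ j, 0 ≤ muD m t σ k j ∧ muD m t σ k j ≤ 2)

/-- (SP2) at `k`. -/
def SP2 (m q : ℕ) (t : VecZ m) (σ : Equiv.Perm (Fin (2 * m))) (k : ℤ) : Prop :=
  cD m t σ k ≤ q

/-- (SP3) at `k`. -/
def SP3 (m q : ℕ) (t : VecZ m) (σ : Equiv.Perm (Fin (2 * m))) (k : ℕ) : Prop :=
  (SelfDual m t σ (k : ℤ) ∧ (fun j => muD m t σ (k : ℤ) j - muQ m q j) ∉ QveeD m) →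
    ∃ j₁ j₂ : Fin (2 * m), memA m k j₁ ∧ memB m k j₂ ∧
      muD m t σ (k : ℤ) j₁ = 1 ∧ muD m t σ (k : ℤ) j₂ = 1

/-- (SP1') at `k`. -/
def SP1' (m : ℕ) (t : VecZ m) (σ : Equiv.Perm (Fin (2 * m))) (k : ℤ) : Prop :=
  (∀ j, nuD m t σ k j + nuD m t σ k j.rev = 2) ∧
  (∀ j, 0 ≤ nuD m t σ k j ∧ nuD m t σ k j ≤ 2)

/-- (SP2') at `k`. -/
def SP2' (m q : ℕ) (t : VecZ m) (σ : Equiv.Perm (Fin (2 * m))) (k : ℤ) : Prop :=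
  (Set.ncard {j : Fin (2 * m) | nuD m t σ k j = 2} : ℝ) +
    (Set.ncard {j : Fin (2 * m) | ¬ IsIntVal (nuD m t σ k j)} : ℝ) / 4 ≤ (q : ℝ)

/-- `ν_k^w − μ ∈ Q∨_{D_m}`. -/
def NuCongQvee (m q : ℕ) (t : VecZ m) (σ : Equiv.Perm (Fin (2 * m))) (k : ℤ) : Prop :=
  ∃ y ∈ QveeD m, ∀ j, nuD m t σ k j = ((muQ m q j + y j : ℤ) : ℝ)

/-- (SP3') at `k`. -/
def SP3' (m q : ℕ) (t : VecZ m) (σ : Equiv.Perm (Fin (2 * m))) (k : ℕ) : Prop :=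
  ((∀ j, IsIntVal (nuD m t σ (k : ℤ) j)) ∧ ¬ NuCongQvee m q t σ (k : ℤ)) →
    ∃ j₁ j₂ : Fin (2 * m), memA m k j₁ ∧ memB m k j₂ ∧
      nuD m t σ (k : ℤ) j₁ = 1 ∧ nuD m t σ (k : ℤ) j₂ = 1

/-- the orbit `S_{2m}^∘ · μ` inside `ℝ^{2m}`. -/
def OrbitMu (m q : ℕ) : Set (VecR m) :=
  {x | ∃ σ : Equiv.Perm (Fin (2 * m)), InSO m σ ∧ ∀ j, x j = ((muQ m q (σ⁻¹ j) : ℤ) : ℝ)}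

/-- `Conv(S_{2m}^∘ · μ)`. -/
def ConvMu (m q : ℕ) : Set (VecR m) := convexHull ℝ (OrbitMu m q)

/-- the affine action of `w = t_t σ` on `ℝ^{2m}`. -/
noncomputable def actR (m : ℕ) (t : VecZ m) (σ : Equiv.Perm (Fin (2 * m))) (x : VecR m) (j : Fin (2 * m)) : ℝ :=
  (t j : ℝ) + x (σ⁻¹ j)

/-- the point `a_k = ((−1/2)^{(k)}, 0^{(2m−2k)}, (1/2)^{(k)})`. -/
noncomputable def aD (m k : ℕ) (j : Fin (2 * m)) : ℝ :=
  if (j : ℕ) < k then -(1 / 2) else if (j : ℕ) < 2 * m - k then 0 else 1 / 2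

/-- the point `a_{0'} = (−1, 0^{(2m−2)}, 1)`. -/
noncomputable def a0' (m : ℕ) (j : Fin (2 * m)) : ℝ :=
  if (j : ℕ) = 0 then -1 else if (j : ℕ) = 2 * m - 1 then 1 else 0

/-- the point `a_{m'} = ((−1/2)^{(m−1)}, 1/2, −1/2, (1/2)^{(m−1)})`. -/
noncomputable def am' (m : ℕ) (j : Fin (2 * m)) : ℝ :=
  if (j : ℕ) < m - 1 then -(1 / 2)
  else if (j : ℕ) = m - 1 then 1 / 2
  else if (j : ℕ) = m then -(1 / 2)
  else 1 / 2

/-- `ν_{0'}^w = w·a_{0'} − a_{0'}`. -/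
noncomputable def nu0' (m : ℕ) (t : VecZ m) (σ : Equiv.Perm (Fin (2 * m))) (j : Fin (2 * m)) : ℝ :=
  actR m t σ (a0' m) j - a0' m j

/-- `ν_{m'}^w = w·a_{m'} − a_{m'}`. -/
noncomputable def num' (m : ℕ) (t : VecZ m) (σ : Equiv.Perm (Fin (2 * m))) (j : Fin (2 * m)) : ℝ :=
  actR m t σ (am' m) j - am' m j

/-- membership in the real apartment `{x : x(1)+x(2m) = ⋯ = x(m)+x(m+1)}`. -/
def InApartR (m : ℕ) (x : VecR m) : Prop :=
  ∀ j j' : Fin (2 * m), x j + x j.rev = x j' + x j'.rev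

/-- membership in the base alcove `A_{D_m}`. -/
def InAlcove (m : ℕ) (x : VecR m) : Prop :=
  InApartR m x ∧
  (∀ j0 jt : Fin (2 * m), (j0 : ℕ) = 0 → 1 ≤ (jt : ℕ) → (jt : ℕ) ≤ m →
    x j0 < x jt ∧ x j0.rev - 1 < x jt) ∧
  (∀ j j' : Fin (2 * m), 1 ≤ (j : ℕ) → (j : ℕ) ≤ m - 2 → (j : ℕ) < (j' : ℕ) →
    (j' : ℕ) ≤ m → x j < x j')

/-- `w = t_t σ` is μ-permissible: `w ≡ t_μ mod W_{aff}` (equivalently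
`ν_0^w − μ ∈ Q∨_{D_m}`) and `w·x − x ∈ Conv(S_{2m}^∘ μ)` for all `x` in the base alcove. -/
def MuPermissible (m q : ℕ) (t : VecZ m) (σ : Equiv.Perm (Fin (2 * m))) : Prop :=
  NuCongQvee m q t σ 0 ∧
  ∀ x : VecR m, InAlcove m x → (fun j => actR m t σ x j - x j) ∈ ConvMu m q

/-- the coroot `α∨_{i,j} = e_i − e_j + e_{j*} − e_{i*}`. -/
def corootD (m : ℕ) (i j l : Fin (2 * m)) : ℤ :=
  (if l = i then 1 else 0) - (if l = j then 1 else 0) +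
    (if l = j.rev then 1 else 0) - (if l = i.rev then 1 else 0)

/-- `(t', σ')` represents `s_{α̃_{i,j;d}} · w` for `w = t_t σ`: on the apartment it
acts by `x ↦ w·x − ⟨α̃_{i,j;d}, w·x⟩ α∨_{i,j}`. -/
def IsReflOf (m : ℕ) (i j : Fin (2 * m)) (d : ℤ) (t : VecZ m) (σ : Equiv.Perm (Fin (2 * m)))
    (t' : VecZ m) (σ' : Equiv.Perm (Fin (2 * m))) : Prop :=
  ∀ x : VecR m, InApartR m x → ∀ l,
    actR m t' σ' x l =
      actR m t σ x l - (actR m t σ x i - actR m t σ x j - (d : ℝ)) * (corootD m i j l : ℝ)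

/-- Membership of `i` in `2mℤ ± I`. -/
def FaceIdxD (m : ℕ) (I : Finset ℕ) (i : ℤ) : Prop :=
  ∃ a ∈ I, ∃ b : ℤ, i = 2 * (m : ℤ) * b + (a : ℤ) ∨ i = 2 * (m : ℤ) * b - (a : ℤ)

/-- `v` is a `d`-face of type `(2m, I)`. -/
structure IsFaceD (m : ℕ) (I : Finset ℕ) (d : ℤ) (v : ℤ → VecZ m) : Prop where
  per : ∀ i, FaceIdxD m I i → ∀ j, v (i + 2 * (m : ℤ)) j = v i j - 1
  mono : ∀ i i', FaceIdxD m I i → FaceIdxD m I i' → i ≤ i' → ∀ j, v i' j ≤ v i j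
  sumEq : ∀ i i', FaceIdxD m I i → FaceIdxD m I i' → (∑ j, v i j) - (∑ j, v i' j) = i' - i
  dual : ∀ i, FaceIdxD m I i → ∀ j, v i j + v (-i) j.rev = d

/-- `μ_i^v := v_i − ω_i` for a face `v`. -/
def muFaceD (m : ℕ) (v : ℤ → VecZ m) (i : ℤ) (j : Fin (2 * m)) : ℤ := v i j - omegaD m i j

/-- `ε` of a translation vector: the sum of the first `m` entries mod 2. -/
def epsVec (m : ℕ) (x : VecZ m) : ZMod 2 :=
  ((∑ j ∈ Finset.univ.filter (fun j : Fin (2 * m) => (j : ℕ) < m), x j : ℤ) : ZMod 2)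

/-- membership of `(v, γ)` in `F_{I,D_m}`. -/
def MemFD (m : ℕ) (I : Finset ℕ) (v : ℤ → VecZ m) (γ : ZMod 2) : Prop :=
  (∃ d, IsFaceD m I d v) ∧
  (if 0 ∈ I then
    if m ∈ I then
      (fun j => muFaceD m v 0 j - muFaceD m v (m : ℤ) j) ∈ QveeD m ∧
        γ = epsVec m (fun j => muFaceD m v 0 j)
    else γ = epsVec m (fun j => muFaceD m v 0 j)
  else if m ∈ I then γ = epsVec m (fun j => muFaceD m v (m : ℤ) j)
  else True)

/-- membership of `t_tx σx` in `W_{I,D_m}` (the group conditions on `(tx, σx)` being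
assumed separately): it lies in `W_{aff,D_m}` and fixes `a_k` for all `k ∈ I`. -/
def MemWI (m : ℕ) (I : Finset ℕ) (tx : VecZ m) (σx : Equiv.Perm (Fin (2 * m))) : Prop :=
  tx ∈ QveeD m ∧ ∀ k ∈ I, ∀ j, (tx j : ℝ) + aD m k (σx⁻¹ j) = aD m k j

/-- (SP1) at `k` for a face. -/
def SP1F (m : ℕ) (v : ℤ → VecZ m) (k : ℕ) : Prop :=
  (∀ j, muFaceD m v (k : ℤ) j + muFaceD m v (-(k : ℤ)) j.rev = 2) ∧
  (∀ j, 0 ≤ muFaceD m v (k : ℤ) j ∧ muFaceD m v (k : ℤ) j ≤ 2)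

/-- (SP2) at `k` for a face. -/
def SP2F (m q : ℕ) (v : ℤ → VecZ m) (k : ℕ) : Prop :=
  Set.ncard {j : Fin (2 * m) | muFaceD m v (k : ℤ) j = 2} ≤ q

/-- (SP3) at `k` for a face. -/
def SP3F (m q : ℕ) (v : ℤ → VecZ m) (k : ℕ) : Prop :=
  ((∀ j, muFaceD m v (k : ℤ) j = muFaceD m v (-(k : ℤ)) j) ∧
      (fun j => muFaceD m v (k : ℤ) j - muQ m q j) ∉ QveeD m) →
    ∃ j₁ j₂ : Fin (2 * m), memA m k j₁ ∧ memB m k j₂ ∧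
      muFaceD m v (k : ℤ) j₁ = 1 ∧ muFaceD m v (k : ℤ) j₂ = 1

/-- `(v, γ) ∈ F_{I,D_m}` is μ-spin-permissible. -/
def SpinPermF (m q : ℕ) (I : Finset ℕ) (v : ℤ → VecZ m) (γ : ZMod 2) : Prop :=
  γ = epsVec m (fun j => muQ m q j) ∧ ∀ k ∈ I, SP1F m v k ∧ SP2F m q v k ∧ SP3F m q v k

section Infra

private lemma ediv_neg_one {n A : ℤ} (hn : 0 < n) (h1 : -n ≤ A) (h2 : A < 0) : A / n = -1 := by
  have hne : n ≠ 0 := by omega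
  have h := Int.add_mul_ediv_right (A + n) (-1) hne
  rw [show A + n + -1 * n = A by ring] at h
  rw [h, Int.ediv_eq_zero_of_lt (by omega) (by omega)]; norm_num

private lemma ediv_neg_sub_one {n : ℤ} (hn : 0 < n) (B : ℤ) : (-B - 1) / n = -(B / n) - 1 := by
  have hne : n ≠ 0 := by omega
  have h0 := Int.mul_ediv_add_emod B n
  have hr0 : 0 ≤ B % n := Int.emod_nonneg B hne
  have hr1 : B % n < n := Int.emod_lt_of_pos B hn
  have h1 : -B - 1 = (n - B % n - 1) + (-(B / n) - 1) * n := by linear_combination h0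
  rw [h1, Int.add_mul_ediv_right _ _ hne, Int.ediv_eq_zero_of_lt (by omega) (by omega)]
  ring

private lemma omegaD_eq {m : ℕ} (hm : 0 < m) (i : ℤ) (j : Fin (2 * m)) :
    omegaD m i j = (((j : ℕ) : ℤ) - i) / (2 * (m : ℤ)) := by
  have hn : (0:ℤ) < 2 * m := by positivity
  have hne : (2 * (m:ℤ)) ≠ 0 := by omega
  have hbc := Int.mul_ediv_add_emod i (2 * (m:ℤ))
  have hc0 : 0 ≤ i % (2 * (m:ℤ)) := Int.emod_nonneg i hne
  have hc1 : i % (2 * (m:ℤ)) < 2 * m := Int.emod_lt_of_pos i hn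
  have hj : ((j:ℕ):ℤ) < 2 * m := by exact_mod_cast j.isLt
  have hj0 : (0:ℤ) ≤ ((j:ℕ):ℤ) := Int.ofNat_nonneg _
  have key : (((j:ℕ):ℤ) - i) = (((j:ℕ):ℤ) - i % (2 * (m:ℤ))) + (-(i / (2 * (m:ℤ)))) * (2 * (m:ℤ)) := by
    linear_combination hbc
  rw [key, Int.add_mul_ediv_right _ _ hne]
  unfold omegaD
  by_cases h : ((j:ℕ):ℤ) < i % (2 * (m:ℤ))
  · rw [if_pos h]
    have hd : (((j:ℕ):ℤ) - i % (2 * (m:ℤ))) / (2 * (m:ℤ)) = -1 :=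
      ediv_neg_one hn (by omega) (by omega)
    rw [hd]; ring
  · rw [if_neg h]
    have hd : (((j:ℕ):ℤ) - i % (2 * (m:ℤ))) / (2 * (m:ℤ)) = 0 :=
      Int.ediv_eq_zero_of_lt (by omega) (by omega)
    rw [hd]; ring

private lemma val_rev {m : ℕ} (j : Fin (2 * m)) : ((j.rev : ℕ) : ℤ) = 2 * m - 1 - (j : ℕ) := by
  have := j.isLt
  rw [Fin.val_rev]
  omega

private lemma omegaD_shift {m : ℕ} (hm : 0 < m) (i : ℤ) (j : Fin (2 * m)) :
    omegaD m (i + 2 * m) j = omegaD m i j - 1 := by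
  have hne : (2 * (m:ℤ)) ≠ 0 := by positivity
  rw [omegaD_eq hm, omegaD_eq hm]
  rw [show ((j:ℕ):ℤ) - (i + 2 * m) = (((j:ℕ):ℤ) - i) + (-1) * (2 * (m:ℤ)) by ring,
    Int.add_mul_ediv_right _ _ hne]
  ring

private lemma omegaD_neg {m : ℕ} (hm : 0 < m) (i : ℤ) (j : Fin (2 * m)) :
    omegaD m (-i) j = -omegaD m i j.rev := by
  have hn : (0:ℤ) < 2 * m := by positivity
  rw [omegaD_eq hm, omegaD_eq hm, val_rev]
  have h1 : (2 * (m:ℤ)) - 1 - (j:ℕ) - i = (-(((j:ℕ):ℤ) + i) - 1) + 1 * (2 * (m:ℤ)) := by ring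
  rw [h1, Int.add_mul_ediv_right _ _ (by omega), ediv_neg_sub_one hn]
  rw [show ((j:ℕ):ℤ) - -i = ((j:ℕ):ℤ) + i by ring]
  ring

private lemma omegaD_zero {m : ℕ} (hm : 0 < m) (j : Fin (2 * m)) : omegaD m 0 j = 0 := by
  rw [omegaD_eq hm]
  have hj : ((j:ℕ):ℤ) < 2 * m := by exact_mod_cast j.isLt
  have hj0 : (0:ℤ) ≤ ((j:ℕ):ℤ) := Int.ofNat_nonneg _
  exact Int.ediv_eq_zero_of_lt (by omega) (by omega)

private lemma omegaD_nat {m k : ℕ} (hm : 0 < m) (hk : k < 2 * m) (j : Fin (2 * m)) :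
    omegaD m (k : ℤ) j = if (j : ℕ) < k then -1 else 0 := by
  have hn : (0:ℤ) < 2 * m := by positivity
  have hj : ((j:ℕ):ℤ) < 2 * m := by exact_mod_cast j.isLt
  have hj0 : (0:ℤ) ≤ ((j:ℕ):ℤ) := Int.ofNat_nonneg _
  have hkz : ((k:ℕ):ℤ) < 2 * m := by exact_mod_cast hk
  have hkz0 : (0:ℤ) ≤ ((k:ℕ):ℤ) := Int.ofNat_nonneg _
  rw [omegaD_eq hm]
  by_cases h : (j : ℕ) < k
  · have hz : ((j:ℕ):ℤ) < (k:ℤ) := by exact_mod_cast h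
    rw [if_pos h]
    exact ediv_neg_one hn (by omega) (by omega)
  · have hz : ¬ (((j:ℕ):ℤ) < (k:ℤ)) := by exact_mod_cast h
    rw [if_neg h]
    exact Int.ediv_eq_zero_of_lt (by omega) (by omega)

private lemma omegaD_neg_nat {m k : ℕ} (hm : 0 < m) (hk : k < 2 * m) (j : Fin (2 * m)) :
    omegaD m (-(k : ℤ)) j = if 2 * m - k ≤ (j : ℕ) then 1 else 0 := by
  rw [omegaD_neg hm, omegaD_nat hm hk j.rev]
  have := j.isLt
  have hrev : (j.rev : ℕ) = 2 * m - 1 - (j : ℕ) := by rw [Fin.val_rev]; omega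
  rw [hrev]
  split_ifs <;> omega

end Infra
section FixMachinery

private lemma rev_lt_m {m : ℕ} (j : Fin (2 * m)) : ((j.rev : ℕ) < m) ↔ ¬ ((j : ℕ) < m) := by
  have h1 := j.isLt
  have h2 : (j.rev : ℕ) = 2 * m - 1 - (j : ℕ) := by rw [Fin.val_rev]; omega
  omega

private lemma inv_rev_equivariant {m : ℕ} {σ : Equiv.Perm (Fin (2 * m))}
    (h : ∀ j, σ j.rev = (σ j).rev) : ∀ j, σ⁻¹ j.rev = (σ⁻¹ j).rev := by
  intro j
  have := h (σ⁻¹ j)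
  rw [Equiv.Perm.coe_inv, Equiv.apply_symm_apply] at this
  rw [← this, Equiv.Perm.coe_inv, Equiv.symm_apply_apply]

private lemma aD_eq {m k : ℕ} (hm : 0 < m) (hk : k ≤ m) (j : Fin (2 * m)) :
    aD m k j = ((omegaD m (k : ℤ) j + omegaD m (-(k : ℤ)) j : ℤ) : ℝ) / 2 := by
  have hk2 : k < 2 * m := by omega
  rw [omegaD_nat hm hk2, omegaD_neg_nat hm hk2]
  unfold aD
  have := j.isLt
  split_ifs <;> first | omega | (push_cast; norm_num)

private lemma fix_of_aD {m k : ℕ} (hm : 0 < m) (hk : k ≤ m) (tx : VecZ m)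
    (τ : Fin (2 * m) → Fin (2 * m))
    (hfix : ∀ j, (tx j : ℝ) + aD m k (τ j) = aD m k j) (j : Fin (2 * m)) :
    tx j + omegaD m (k : ℤ) (τ j) = omegaD m (k : ℤ) j := by
  have hk2 : k < 2 * m := by omega
  have h := hfix j
  rw [aD_eq hm hk, aD_eq hm hk] at h
  have h2 : (2 * tx j : ℤ) = (omegaD m (k:ℤ) j + omegaD m (-(k:ℤ)) j)
      - (omegaD m (k:ℤ) (τ j) + omegaD m (-(k:ℤ)) (τ j)) := by
    have h3 : ((2 * tx j : ℤ) : ℝ) = (((omegaD m (k:ℤ) j + omegaD m (-(k:ℤ)) j)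
      - (omegaD m (k:ℤ) (τ j) + omegaD m (-(k:ℤ)) (τ j)) : ℤ) : ℝ) := by
      push_cast at h ⊢; linarith
    exact_mod_cast h3
  have hj := j.isLt
  have hτj := (τ j).isLt
  rw [omegaD_nat hm hk2, omegaD_neg_nat hm hk2, omegaD_nat hm hk2, omegaD_neg_nat hm hk2] at h2
  rw [omegaD_nat hm hk2, omegaD_nat hm hk2]
  split_ifs at h2 ⊢ <;> omega

private lemma fix_shift {m : ℕ} (hm : 0 < m) {tx : VecZ m} {τ : Fin (2 * m) → Fin (2 * m)} {i : ℤ}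
    (h : ∀ j, tx j + omegaD m i (τ j) = omegaD m i j) (j : Fin (2 * m)) :
    tx j + omegaD m (i + 2 * m) (τ j) = omegaD m (i + 2 * m) j := by
  rw [omegaD_shift hm, omegaD_shift hm]
  have := h j
  omega

private lemma fix_unshift {m : ℕ} (hm : 0 < m) {tx : VecZ m} {τ : Fin (2 * m) → Fin (2 * m)} {i : ℤ}
    (h : ∀ j, tx j + omegaD m i (τ j) = omegaD m i j) (j : Fin (2 * m)) :
    tx j + omegaD m (i - 2 * m) (τ j) = omegaD m (i - 2 * m) j := by
  have e1 := omegaD_shift hm (i - 2 * m) (τ j)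
  have e2 := omegaD_shift hm (i - 2 * m) j
  rw [show i - 2 * (m:ℤ) + 2 * m = i by ring] at e1 e2
  have := h j
  omega

private lemma fix_neg {m : ℕ} (hm : 0 < m) {tx : VecZ m} {τ : Fin (2 * m) → Fin (2 * m)} {i : ℤ}
    (hanti : ∀ j, tx j + tx j.rev = 0) (hτ : ∀ j, τ j.rev = (τ j).rev)
    (h : ∀ j, tx j + omegaD m i (τ j) = omegaD m i j) (j : Fin (2 * m)) :
    tx j + omegaD m (-i) (τ j) = omegaD m (-i) j := by
  have h1 := h j.rev
  rw [hτ] at h1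
  have e1 := omegaD_neg hm i (τ j)
  have e2 := omegaD_neg hm i j
  have := hanti j
  omega

private lemma fix_all {m : ℕ} (hm : 0 < m) {I : Finset ℕ} {tx : VecZ m}
    {τ : Fin (2 * m) → Fin (2 * m)}
    (hanti : ∀ j, tx j + tx j.rev = 0) (hτ : ∀ j, τ j.rev = (τ j).rev)
    (hk : ∀ k ∈ I, ∀ j, tx j + omegaD m (k : ℤ) (τ j) = omegaD m (k : ℤ) j) :
    ∀ i, FaceIdxD m I i → ∀ j, tx j + omegaD m i (τ j) = omegaD m i j := by
  have step : ∀ i : ℤ, (∀ j, tx j + omegaD m i (τ j) = omegaD m i j) →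
      ∀ b : ℤ, ∀ j, tx j + omegaD m (2 * (m:ℤ) * b + i) (τ j) = omegaD m (2 * (m:ℤ) * b + i) j := by
    intro i hi b
    induction b using Int.induction_on with
    | zero => simpa using hi
    | succ b ih =>
        intro j
        have h2 := fix_shift hm ih j
        rw [show 2 * (m:ℤ) * (b + 1) + i = (2 * (m:ℤ) * b + i) + 2 * m by ring]
        exact h2
    | pred b ih =>
        intro j
        have h2 := fix_unshift hm ih j
        rw [show 2 * (m:ℤ) * (-b - 1) + i = (2 * (m:ℤ) * (-b) + i) - 2 * m by ring]
        exact h2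
  rintro i ⟨a, haI, b, (rfl | rfl)⟩
  · exact step (a : ℤ) (hk a haI) b
  · intro j
    have h2 := step (-(a : ℤ)) (fix_neg hm hanti hτ (hk a haI)) b j
    rw [show 2 * (m:ℤ) * b - (a : ℤ) = 2 * (m:ℤ) * b + (-(a:ℤ)) by ring]
    exact h2

private lemma even_of_cast_eq {a b : ℤ} (h : ((a : ZMod 2)) = (b : ZMod 2)) : Even (a - b) := by
  have h0 : ((a - b : ℤ) : ZMod 2) = 0 := by push_cast; rw [h]; ring
  rw [ZMod.intCast_zmod_eq_zero_iff_dvd] at h0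
  exact even_iff_two_dvd.mpr (by exact_mod_cast h0)

private lemma cast_eq_of_even {a b : ℤ} (h : Even (a - b)) : ((a : ZMod 2)) = (b : ZMod 2) := by
  obtain ⟨c, hc⟩ := h
  have : a = b + 2 * c := by omega
  rw [this]
  push_cast
  have h2 : (2 : ZMod 2) = 0 := by decide
  rw [h2]
  ring

private lemma transversal_parity {m : ℕ} (y : VecZ m) (τ : Equiv.Perm (Fin (2 * m)))
    (hanti : ∀ j, y j + y j.rev = 0) (hτ : ∀ j, τ j.rev = (τ j).rev) :
    Even ((∑ j ∈ Finset.univ.filter (fun j : Fin (2 * m) => (j : ℕ) < m), y (τ j))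
      - (∑ j ∈ Finset.univ.filter (fun j : Fin (2 * m) => (j : ℕ) < m), y j)) := by
  classical
  set F := Finset.univ.filter (fun j : Fin (2 * m) => (j : ℕ) < m) with hF
  set S := F.image τ with hS
  have hinj : ∀ x ∈ F, ∀ y ∈ F, τ x = τ y → x = y := fun x _ y _ h => τ.injective h
  have hsum1 : ∑ l ∈ S, y l = ∑ j ∈ F, y (τ j) := Finset.sum_image hinj
  have hτinv : ∀ j, τ⁻¹ j.rev = (τ⁻¹ j).rev := inv_rev_equivariant hτ
  have hmemS : ∀ l, l ∈ S ↔ ((τ⁻¹ l : Fin (2*m)) : ℕ) < m := by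
    intro l
    simp only [hS, Finset.mem_image, hF, Finset.mem_filter, Finset.mem_univ, true_and]
    constructor
    · rintro ⟨j, hj, rfl⟩; rwa [Equiv.Perm.coe_inv, Equiv.symm_apply_apply]
    · intro h; exact ⟨τ⁻¹ l, h, by rw [Equiv.Perm.coe_inv, Equiv.apply_symm_apply]⟩
  have hpair : ∀ l : Fin (2 * m), l.rev ∈ S ↔ ¬ l ∈ S := by
    intro l
    rw [hmemS, hmemS, hτinv, rev_lt_m]
  -- decompose
  set X := ∑ l ∈ F.filter (fun l : Fin (2*m) => l ∈ S), y l with hX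
  set C := ∑ l ∈ F.filter (fun l : Fin (2*m) => ¬ l ∈ S), y l with hC
  have hA : ∑ l ∈ S.filter (fun l : Fin (2*m) => (l : ℕ) < m), y l
      + ∑ l ∈ S.filter (fun l : Fin (2*m) => ¬ (l : ℕ) < m), y l = ∑ l ∈ S, y l :=
    Finset.sum_filter_add_sum_filter_not S _ y
  have hB : ∑ l ∈ F.filter (fun l : Fin (2*m) => l ∈ S), y l
      + ∑ l ∈ F.filter (fun l : Fin (2*m) => ¬ l ∈ S), y l = ∑ l ∈ F, y l :=
    Finset.sum_filter_add_sum_filter_not F _ y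
  have hSF : S.filter (fun l : Fin (2*m) => (l : ℕ) < m) = F.filter (fun l : Fin (2*m) => l ∈ S) := by
    ext l
    simp only [Finset.mem_filter, hF, Finset.mem_univ, true_and]
    tauto
  have hneg : ∑ l ∈ S.filter (fun l : Fin (2*m) => ¬ (l : ℕ) < m), y l
      = ∑ l ∈ F.filter (fun l : Fin (2*m) => ¬ l ∈ S), (- y l) := by
    apply Finset.sum_nbij' (fun l => l.rev) (fun l => l.rev)
    · intro a ha
      simp only [Finset.mem_filter, hF, Finset.mem_univ, true_and] at ha ⊢
      obtain ⟨h1, h2⟩ := ha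
      refine ⟨(rev_lt_m a).mpr h2, fun hc => ((hpair a).mp hc) h1⟩
    · intro a ha
      simp only [Finset.mem_filter, hF, Finset.mem_univ, true_and] at ha ⊢
      obtain ⟨h1, h2⟩ := ha
      exact ⟨(hpair a).mpr h2, fun hc => ((rev_lt_m a).mp hc) h1⟩
    · intro a _; exact Fin.rev_rev a
    · intro a _; exact Fin.rev_rev a
    · intro a _
      have := hanti a.rev
      rw [Fin.rev_rev] at this
      omega
  rw [← hsum1, ← hA, ← hB, hSF, hneg, Finset.sum_neg_distrib]
  exact ⟨-C, by ring⟩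

end FixMachinery
section Parts12

private lemma epsZero_of_even {m : ℕ} {x : VecZ m}
    (h : Even (∑ j ∈ Finset.univ.filter (fun j : Fin (2 * m) => (j : ℕ) < m), x j)) :
    epsVec m x = 0 := by
  unfold epsVec
  have h2 := cast_eq_of_even (a := ∑ j ∈ Finset.univ.filter (fun j : Fin (2 * m) => (j : ℕ) < m), x j)
    (b := 0) (by simpa using h)
  simpa using h2

private lemma part1lem {m : ℕ} (hm : 2 ≤ m) (I : Finset ℕ) (hIm : ∀ a ∈ I, a ≤ m)
    (tx : VecZ m) (σx : Equiv.Perm (Fin (2 * m))) (hso : InSO m σx) (hwi : MemWI m I tx σx) :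
    (∀ i, FaceIdxD m I i → ∀ j, tx j + omegaD m i (σx⁻¹ j) = omegaD m i j) ∧ epsVec m tx = 0 := by
  have hm0 : 0 < m := by omega
  obtain ⟨⟨hanti, heven⟩, hfixa⟩ := hwi
  constructor
  · apply fix_all hm0 hanti (inv_rev_equivariant hso.2)
    intro k hkI
    exact fix_of_aD hm0 (hIm k hkI) tx _ (hfixa k hkI)
  · exact epsZero_of_even heven

private lemma part2lem {m : ℕ} (hm : 2 ≤ m) (I : Finset ℕ) (hI : I.Nonempty)
    (hIm : ∀ a ∈ I, a ≤ m)
    (t : VecZ m) (σ : Equiv.Perm (Fin (2 * m))) (t' : VecZ m) (σ' : Equiv.Perm (Fin (2 * m)))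
    (ht : InXD m t) (hs : InSO m σ) (ht' : InXD m t') (hs' : InSO m σ') :
    (((∀ i, FaceIdxD m I i → ∀ j,
          t j + omegaD m i (σ⁻¹ j) = t' j + omegaD m i (σ'⁻¹ j)) ∧
        epsVec m t = epsVec m t') ↔
      (∃ (tx : VecZ m) (σx : Equiv.Perm (Fin (2 * m))),
        InXD m tx ∧ InSO m σx ∧ MemWI m I tx σx ∧
          (∀ j, t' j = t j + tx (σ⁻¹ j)) ∧ σ' = σ * σx)) := by
  have hm0 : 0 < m := by omega
  constructor
  · rintro ⟨heq, heps⟩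
    refine ⟨fun l => t' (σ l) - t (σ l), σ⁻¹ * σ', ?_, ?_, ?_, ?_, ?_⟩
    rotate_right 2
    · intro j
      simp [Equiv.Perm.coe_inv, Equiv.symm_apply_apply]
    · rw [← mul_assoc, mul_inv_cancel, one_mul]
    all_goals
      set σx : Equiv.Perm (Fin (2 * m)) := σ⁻¹ * σ' with hσx
      set tx : VecZ m := fun l => t' (σ l) - t (σ l) with htx
    all_goals
      have hσxrev : ∀ j, σx j.rev = (σx j).rev := by
        intro j
        simp only [hσx, Equiv.Perm.mul_apply]
        rw [hs'.2]
        exact inv_rev_equivariant hs.2 _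
    all_goals
      have hfix : ∀ i, FaceIdxD m I i → ∀ l, tx l + omegaD m i (σx⁻¹ l) = omegaD m i l := by
        intro i hi l
        have h := heq i hi (σ l)
        have h1 : σ⁻¹ (σ l) = l := Equiv.symm_apply_apply σ l
        have h2 : σ'⁻¹ (σ l) = σx⁻¹ l := by
          simp [hσx, mul_inv_rev, Equiv.Perm.mul_apply]
        rw [h1, h2] at h
        simp only [htx]
        omega
    all_goals
      obtain ⟨a, haI⟩ := hI
      have hia : FaceIdxD m I (a : ℤ) := ⟨a, haI, 0, Or.inl (by ring)⟩
      have hina : FaceIdxD m I (-(a : ℤ)) := ⟨a, haI, 0, Or.inr (by ring)⟩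
      have hanti : ∀ l, tx l + tx l.rev = 0 := by
        intro l
        have h1 := hfix (a : ℤ) hia l.rev
        have hrev : σx⁻¹ l.rev = (σx⁻¹ l).rev := inv_rev_equivariant hσxrev l
        rw [hrev] at h1
        have e1 := omegaD_neg hm0 (a : ℤ) (σx⁻¹ l)
        have e2 := omegaD_neg hm0 (a : ℤ) l
        have h2 := hfix (-(a : ℤ)) hina l
        omega
    · -- InXD tx
      intro j j'
      have := hanti j
      have := hanti j'
      omega
    · -- InSO σx
      refine ⟨?_, hσxrev⟩
      simp [hσx, hs.1, hs'.1]
    · -- MemWI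
      have heven : Even (∑ l ∈ Finset.univ.filter (fun l : Fin (2 * m) => (l : ℕ) < m), tx l) := by
        have hy : ∀ j : Fin (2 * m), tx j = (fun j => t' j - t j) (σ j) := by
          intro j; simp [htx]
        have hyanti : ∀ j : Fin (2 * m), (t' j - t j) + (t' j.rev - t j.rev) = 0 := by
          intro j
          have h1 : t' j - t j = tx (σ⁻¹ j) := by
            simp [htx, Equiv.Perm.coe_inv, Equiv.apply_symm_apply]
          have h2 : t' j.rev - t j.rev = tx (σ⁻¹ j.rev) := by
            simp [htx, Equiv.Perm.coe_inv, Equiv.apply_symm_apply]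
          rw [h1, h2, inv_rev_equivariant hs.2]
          exact hanti _
        have htp := transversal_parity (fun j => t' j - t j) σ hyanti hs.2
        have hepsd : Even ((∑ j ∈ Finset.univ.filter (fun j : Fin (2 * m) => (j : ℕ) < m), t' j)
            - (∑ j ∈ Finset.univ.filter (fun j : Fin (2 * m) => (j : ℕ) < m), t j)) := by
          have := even_of_cast_eq heps.symm
          exact this
        have hsplit : (∑ j ∈ Finset.univ.filter (fun j : Fin (2 * m) => (j : ℕ) < m),
            ((fun j => t' j - t j) j)) = (∑ j ∈ Finset.univ.filter (fun j : Fin (2 * m) => (j : ℕ) < m), t' j)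
            - (∑ j ∈ Finset.univ.filter (fun j : Fin (2 * m) => (j : ℕ) < m), t j) := by
          rw [← Finset.sum_sub_distrib]
        have hsame : (∑ l ∈ Finset.univ.filter (fun l : Fin (2 * m) => (l : ℕ) < m), tx l)
            = ∑ j ∈ Finset.univ.filter (fun j : Fin (2 * m) => (j : ℕ) < m), ((fun j => t' j - t j) (σ j)) := by
          apply Finset.sum_congr rfl
          intro j _
          simp [htx]
        rw [hsame]
        rw [hsplit] at htp
        obtain ⟨c2, hc2⟩ := htp
        obtain ⟨c3, hc3⟩ := hepsd
        exact ⟨c2 + c3, by beta_reduce at hc2 hc3 ⊢; omega⟩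
      refine ⟨⟨hanti, heven⟩, ?_⟩
      intro k hkI j
      have hiak : FaceIdxD m I (k : ℤ) := ⟨k, hkI, 0, Or.inl (by ring)⟩
      have hiank : FaceIdxD m I (-(k : ℤ)) := ⟨k, hkI, 0, Or.inr (by ring)⟩
      have h1 := hfix (k : ℤ) hiak j
      have h2 := hfix (-(k : ℤ)) hiank j
      rw [aD_eq hm0 (hIm k hkI), aD_eq hm0 (hIm k hkI)]
      have h1r : ((tx j : ℤ) : ℝ) + ((omegaD m (k : ℤ) (σx⁻¹ j) : ℤ) : ℝ)
          = ((omegaD m (k : ℤ) j : ℤ) : ℝ) := by exact_mod_cast congrArg (fun z : ℤ => (z : ℝ)) h1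
      have h2r : ((tx j : ℤ) : ℝ) + ((omegaD m (-(k : ℤ)) (σx⁻¹ j) : ℤ) : ℝ)
          = ((omegaD m (-(k : ℤ)) j : ℤ) : ℝ) := by exact_mod_cast congrArg (fun z : ℤ => (z : ℝ)) h2
      push_cast
      push_cast at h1r h2r
      linarith
  · rintro ⟨tx, σx, hxX, hxSO, hxWI, htt', rfl⟩
    obtain ⟨hfixall, heps0⟩ := part1lem hm I hIm tx σx hxSO hxWI
    constructor
    · intro i hi j
      have h1 := hfixall i hi (σ⁻¹ j)
      have h2 : (σ * σx)⁻¹ j = σx⁻¹ (σ⁻¹ j) := by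
        rw [mul_inv_rev]; rfl
      rw [h2, htt' j]
      omega
    · have hanti := hxWI.1.1
      have heven := hxWI.1.2
      have htp := transversal_parity tx σ⁻¹ hanti (inv_rev_equivariant hs.2)
      have hsub : (∑ j ∈ Finset.univ.filter (fun j : Fin (2 * m) => (j : ℕ) < m), t' j)
          = (∑ j ∈ Finset.univ.filter (fun j : Fin (2 * m) => (j : ℕ) < m), t j)
          + ∑ j ∈ Finset.univ.filter (fun j : Fin (2 * m) => (j : ℕ) < m), tx (σ⁻¹ j) := by
        rw [← Finset.sum_add_distrib]
        exact Finset.sum_congr rfl (fun j _ => htt' j)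
      unfold epsVec
      apply cast_eq_of_even
      obtain ⟨c1, hc1⟩ := htp
      obtain ⟨c2, hc2⟩ := heven
      exact ⟨-(c1 + c2), by omega⟩

end Parts12
section SignLemma

private lemma rev_ne {m : ℕ} (hm : 0 < m) (j : Fin (2 * m)) : j.rev ≠ j := by
  intro h
  have h1 := congrArg (fun x : Fin (2 * m) => (x : ℕ)) h
  simp only [Fin.val_rev] at h1
  have := j.isLt
  omega

private lemma ne_rev_of_lt {m : ℕ} {x y : Fin (2 * m)} (hx : (x : ℕ) < m) (hy : (y : ℕ) < m) : x ≠ y.rev := by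
  intro h
  have h1 := congrArg (fun z : Fin (2 * m) => (z : ℕ)) h
  simp only [Fin.val_rev] at h1
  have := y.isLt
  omega

private lemma swap_pair_rev {m : ℕ} (a b x : Fin (2 * m)) (ha : (a : ℕ) < m) (hb : (b : ℕ) < m) :
    (Equiv.swap a b) ((Equiv.swap a.rev b.rev) x.rev)
      = ((Equiv.swap a b) ((Equiv.swap a.rev b.rev) x)).rev := by
  have hx := x.isLt
  have haa := a.isLt
  have hbb := b.isLt
  simp only [Equiv.swap_apply_def]
  split_ifs <;>
    simp only [Fin.ext_iff, Fin.val_rev] at * <;>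
    omega

private lemma swap_self_rev {m : ℕ} (a x : Fin (2 * m)) :
    (Equiv.swap a a.rev) x.rev = ((Equiv.swap a a.rev) x).rev := by
  have hx := x.isLt
  have haa := a.isLt
  simp only [Equiv.swap_apply_def]
  split_ifs <;>
    simp only [Fin.ext_iff, Fin.val_rev] at * <;>
    omega

private lemma sign_one_aux {m : ℕ} (hm : 0 < m) :
    ∀ n : ℕ, ∀ τ : Equiv.Perm (Fin (2 * m)), (∀ j, τ j.rev = (τ j).rev) →
    (∀ j : Fin (2 * m), (j : ℕ) < m → ((τ j : Fin (2 * m)) : ℕ) < m) →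
    (Finset.univ.filter (fun j : Fin (2 * m) => (j : ℕ) < m ∧ τ j ≠ j)).card = n →
    Equiv.Perm.sign τ = 1 := by
  intro n
  induction n using Nat.strong_induction_on with
  | _ n ih =>
    intro τ hτ h0 hcard
    by_cases hzero : ∀ j : Fin (2 * m), (j : ℕ) < m → τ j = j
    · have hone : τ = 1 := by
        apply Equiv.ext
        intro j
        simp only [Equiv.Perm.one_apply]
        by_cases hj : (j : ℕ) < m
        · exact hzero j hj
        · have hrev : ((j.rev : Fin (2 * m)) : ℕ) < m := (rev_lt_m j).mpr hj
          have h2 := hτ j.rev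
          rw [Fin.rev_rev] at h2
          rw [h2, hzero j.rev hrev, Fin.rev_rev]
      rw [hone]
      simp
    · push_neg at hzero
      obtain ⟨j1, hj1m, hj1⟩ := hzero
      have hτj1m : ((τ j1 : Fin (2 * m)) : ℕ) < m := h0 j1 hj1m
      have hne_tj : τ j1 ≠ j1 := hj1
      set s : Equiv.Perm (Fin (2 * m)) :=
        Equiv.swap j1 (τ j1) * Equiv.swap j1.rev (τ j1).rev with hs
      have hsrev : ∀ x : Fin (2 * m), s x.rev = (s x).rev := by
        intro x
        simp only [hs, Equiv.Perm.mul_apply]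
        exact swap_pair_rev j1 (τ j1) x hj1m hτj1m
      set τ' : Equiv.Perm (Fin (2 * m)) := s * τ with hτ'
      have hτ'rev : ∀ j, τ' j.rev = (τ' j).rev := by
        intro j
        simp only [hτ', Equiv.Perm.mul_apply]
        rw [hτ]
        exact hsrev (τ j)
      have hs_lt : ∀ x : Fin (2 * m), (x : ℕ) < m → s x = Equiv.swap j1 (τ j1) x := by
        intro x hx
        simp only [hs, Equiv.Perm.mul_apply]
        rw [Equiv.swap_apply_of_ne_of_ne (ne_rev_of_lt hx hj1m) (ne_rev_of_lt hx hτj1m)]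
      have h0' : ∀ j : Fin (2 * m), (j : ℕ) < m → ((τ' j : Fin (2 * m)) : ℕ) < m := by
        intro j hj
        have hx := h0 j hj
        simp only [hτ', Equiv.Perm.mul_apply]
        rw [hs_lt (τ j) hx]
        by_cases e1 : τ j = j1
        · rw [e1, Equiv.swap_apply_left]; exact hτj1m
        · by_cases e2 : τ j = τ j1
          · rw [e2, Equiv.swap_apply_right]; exact hj1m
          · rw [Equiv.swap_apply_of_ne_of_ne e1 e2]; exact hx
      have hτ'j1 : τ' j1 = j1 := by
        simp only [hτ', Equiv.Perm.mul_apply]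
        rw [hs_lt (τ j1) hτj1m, Equiv.swap_apply_right]
      have hfix_pres : ∀ j : Fin (2 * m), (j : ℕ) < m → τ j = j → τ' j = j := by
        intro j hj hjfix
        simp only [hτ', Equiv.Perm.mul_apply]
        rw [hjfix, hs_lt j hj]
        have e1 : j ≠ j1 := by
          intro h; rw [h] at hjfix; exact hj1 hjfix
        have e2 : j ≠ τ j1 := by
          intro h
          apply hj1
          have : τ j = τ j1 := by rw [hjfix, h]
          have := τ.injective this
          rw [← this, hjfix]
        rw [Equiv.swap_apply_of_ne_of_ne e1 e2]
      -- card decreases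
      have hsubset : (Finset.univ.filter (fun j : Fin (2 * m) => (j : ℕ) < m ∧ τ' j ≠ j))
          ⊆ (Finset.univ.filter (fun j : Fin (2 * m) => (j : ℕ) < m ∧ τ j ≠ j)).erase j1 := by
        intro j hj
        simp only [Finset.mem_filter, Finset.mem_univ, true_and] at hj
        rw [Finset.mem_erase]
        simp only [Finset.mem_filter, Finset.mem_univ, true_and]
        refine ⟨?_, hj.1, ?_⟩
        · intro h; rw [h] at hj; exact hj.2 hτ'j1
        · intro h; exact hj.2 (hfix_pres j hj.1 h)
      have hmem : j1 ∈ Finset.univ.filter (fun j : Fin (2 * m) => (j : ℕ) < m ∧ τ j ≠ j) := by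
        simp only [Finset.mem_filter, Finset.mem_univ, true_and]
        exact ⟨hj1m, hj1⟩
      have hcard' : (Finset.univ.filter (fun j : Fin (2 * m) => (j : ℕ) < m ∧ τ' j ≠ j)).card < n := by
        calc (Finset.univ.filter (fun j : Fin (2 * m) => (j : ℕ) < m ∧ τ' j ≠ j)).card
            ≤ ((Finset.univ.filter (fun j : Fin (2 * m) => (j : ℕ) < m ∧ τ j ≠ j)).erase j1).card :=
              Finset.card_le_card hsubset
          _ < (Finset.univ.filter (fun j : Fin (2 * m) => (j : ℕ) < m ∧ τ j ≠ j)).card := by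
              exact Finset.card_erase_lt_of_mem hmem
          _ = n := hcard
      have hsign' : Equiv.Perm.sign τ' = 1 :=
        ih _ hcard' τ' hτ'rev h0' rfl
      have hsigns : Equiv.Perm.sign s = 1 := by
        simp only [hs, map_mul]
        rw [Equiv.Perm.sign_swap (Ne.symm hne_tj),
            Equiv.Perm.sign_swap (fun h => hne_tj (Fin.rev_injective h).symm)]
        norm_num
      have : Equiv.Perm.sign τ' = Equiv.Perm.sign s * Equiv.Perm.sign τ := by
        simp [hτ', map_mul]
      rw [hsigns, one_mul] at this
      rw [← this, hsign']

private lemma sign_flips {m : ℕ} (hm : 0 < m) :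
    ∀ n : ℕ, ∀ τ : Equiv.Perm (Fin (2 * m)), (∀ j, τ j.rev = (τ j).rev) →
    (Finset.univ.filter (fun j : Fin (2 * m) => (j : ℕ) < m ∧ ¬ ((τ j : Fin (2 * m)) : ℕ) < m)).card = n →
    Equiv.Perm.sign τ = (-1) ^ n := by
  intro n
  induction n with
  | zero =>
    intro τ hτ hcard
    rw [Finset.card_eq_zero, Finset.filter_eq_empty_iff] at hcard
    rw [pow_zero]
    apply sign_one_aux hm (Finset.univ.filter (fun j : Fin (2 * m) => (j : ℕ) < m ∧ τ j ≠ j)).card τ hτ _ rfl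
    intro j hj
    by_contra hc
    exact hcard (Finset.mem_univ j) ⟨hj, hc⟩
  | succ n ihn =>
    intro τ hτ hcard
    have hne : (Finset.univ.filter (fun j : Fin (2 * m) => (j : ℕ) < m ∧ ¬ ((τ j : Fin (2 * m)) : ℕ) < m)).Nonempty := by
      rw [← Finset.card_pos, hcard]; omega
    obtain ⟨j0, hj0⟩ := hne
    simp only [Finset.mem_filter, Finset.mem_univ, true_and] at hj0
    obtain ⟨hj0m, hj0f⟩ := hj0
    set s : Equiv.Perm (Fin (2 * m)) := Equiv.swap (τ j0) ((τ j0).rev) with hs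
    set τ' : Equiv.Perm (Fin (2 * m)) := s * τ with hτ'
    have hτ'rev : ∀ j, τ' j.rev = (τ' j).rev := by
      intro j
      simp only [hτ', Equiv.Perm.mul_apply]
      rw [hτ]
      exact swap_self_rev (τ j0) (τ j)
    have hτ'j0 : τ' j0 = (τ j0).rev := by
      simp only [hτ', hs, Equiv.Perm.mul_apply, Equiv.swap_apply_left]
    have hτ'other : ∀ j : Fin (2 * m), (j : ℕ) < m → j ≠ j0 → τ' j = τ j := by
      intro j hj hne
      simp only [hτ', hs, Equiv.Perm.mul_apply]
      have e1 : τ j ≠ τ j0 := fun h => hne (τ.injective h)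
      have e2 : τ j ≠ (τ j0).rev := by
        intro h
        have h2 : τ j = τ j0.rev := by rw [h, ← hτ]
        have := τ.injective h2
        rw [this, Fin.val_rev] at hj
        have := j0.isLt
        omega
      rw [Equiv.swap_apply_of_ne_of_ne e1 e2]
    have hfilter : (Finset.univ.filter (fun j : Fin (2 * m) => (j : ℕ) < m ∧ ¬ ((τ' j : Fin (2 * m)) : ℕ) < m))
        = (Finset.univ.filter (fun j : Fin (2 * m) => (j : ℕ) < m ∧ ¬ ((τ j : Fin (2 * m)) : ℕ) < m)).erase j0 := by
      ext j
      simp only [Finset.mem_erase, Finset.mem_filter, Finset.mem_univ, true_and]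
      by_cases hj : j = j0
      · subst hj
        simp only [hτ'j0]
        constructor
        · rintro ⟨h1, h2⟩
          exfalso
          apply h2
          rw [Fin.val_rev]
          have := (τ j).isLt
          omega
        · rintro ⟨h1, _⟩
          exact absurd rfl h1
      · constructor
        · rintro ⟨h1, h2⟩
          rw [hτ'other j h1 hj] at h2
          exact ⟨hj, h1, h2⟩
        · rintro ⟨_, h1, h2⟩
          refine ⟨h1, ?_⟩
          rw [hτ'other j h1 hj]
          exact h2
    have hcard' : (Finset.univ.filter (fun j : Fin (2 * m) => (j : ℕ) < m ∧ ¬ ((τ' j : Fin (2 * m)) : ℕ) < m)).card = n := by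
      have hmem0 : j0 ∈ Finset.univ.filter
          (fun j : Fin (2 * m) => (j : ℕ) < m ∧ ¬ ((τ j : Fin (2 * m)) : ℕ) < m) := by
        simp only [Finset.mem_filter, Finset.mem_univ, true_and]
        exact ⟨hj0m, hj0f⟩
      rw [hfilter, Finset.card_erase_of_mem hmem0, hcard]
      omega
    have hsign' := ihn τ' hτ'rev hcard'
    have hrel : Equiv.Perm.sign τ' = Equiv.Perm.sign s * Equiv.Perm.sign τ := by
      simp [hτ', map_mul]
    have hss : Equiv.Perm.sign s = -1 := by
      simp only [hs]
      exact Equiv.Perm.sign_swap (fun h => rev_ne hm (τ j0) h.symm)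
    rw [hsign', hss] at hrel
    have hstep : Equiv.Perm.sign τ = (-1 : ℤˣ) * ((-1 : ℤˣ) ^ n) := by
      have h2 : (-1 : ℤˣ) * ((-1 : ℤˣ) * Equiv.Perm.sign τ) = Equiv.Perm.sign τ := by
        rw [← mul_assoc]
        norm_num
      rw [← h2, ← hrel]
    rw [hstep, pow_succ, mul_comm]

end SignLemma
section FaceUtil

private lemma faceIdx_shift {m : ℕ} {I : Finset ℕ} {i : ℤ} (h : FaceIdxD m I i) :
    FaceIdxD m I (i + 2 * m) := by
  obtain ⟨a, ha, b, (rfl | rfl)⟩ := h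
  · exact ⟨a, ha, b + 1, Or.inl (by ring)⟩
  · exact ⟨a, ha, b + 1, Or.inr (by ring)⟩

private lemma faceIdx_unshift {m : ℕ} {I : Finset ℕ} {i : ℤ} (h : FaceIdxD m I i) :
    FaceIdxD m I (i - 2 * m) := by
  obtain ⟨a, ha, b, (rfl | rfl)⟩ := h
  · exact ⟨a, ha, b - 1, Or.inl (by ring)⟩
  · exact ⟨a, ha, b - 1, Or.inr (by ring)⟩

private lemma faceIdx_neg {m : ℕ} {I : Finset ℕ} {i : ℤ} (h : FaceIdxD m I i) :
    FaceIdxD m I (-i) := by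
  obtain ⟨a, ha, b, (rfl | rfl)⟩ := h
  · exact ⟨a, ha, -b, Or.inr (by ring)⟩
  · exact ⟨a, ha, -b, Or.inl (by ring)⟩

private lemma faceIdx_nat {m : ℕ} {I : Finset ℕ} {a : ℕ} (ha : a ∈ I) : FaceIdxD m I (a : ℤ) :=
  ⟨a, ha, 0, Or.inl (by ring)⟩

private lemma faceIdx_neg_nat {m : ℕ} {I : Finset ℕ} {a : ℕ} (ha : a ∈ I) : FaceIdxD m I (-(a : ℤ)) :=
  ⟨a, ha, 0, Or.inr (by ring)⟩

private lemma faceIdx_shift_mul {m : ℕ} {I : Finset ℕ} {i : ℤ} (h : FaceIdxD m I i) (b : ℤ) :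
    FaceIdxD m I (i + 2 * (m : ℤ) * b) := by
  induction b using Int.induction_on with
  | zero => simpa using h
  | succ b ih =>
      have := faceIdx_shift ih
      rw [show i + 2 * (m:ℤ) * b + 2 * m = i + 2 * (m:ℤ) * (b + 1) by ring] at this
      exact this
  | pred b ih =>
      have := faceIdx_unshift ih
      rw [show i + 2 * (m:ℤ) * (-b) - 2 * m = i + 2 * (m:ℤ) * (-b - 1) by ring] at this
      exact this

private lemma face_per_iter {m : ℕ} {I : Finset ℕ} {d : ℤ} {v : ℤ → VecZ m}
    (hf : IsFaceD m I d v) {i : ℤ} (hi : FaceIdxD m I i) (b : ℤ) (j : Fin (2 * m)) :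
    v (i + 2 * (m : ℤ) * b) j = v i j - b := by
  induction b using Int.induction_on with
  | zero => simp
  | succ b ih =>
      have h2 := hf.per (i + 2 * (m:ℤ) * b) (faceIdx_shift_mul hi b) j
      rw [show i + 2 * (m:ℤ) * b + 2 * m = i + 2 * (m:ℤ) * (b + 1) by ring] at h2
      omega
  | pred b ih =>
      have h2 := hf.per (i + 2 * (m:ℤ) * (-b - 1)) (faceIdx_shift_mul hi (-b - 1)) j
      rw [show i + 2 * (m:ℤ) * (-b - 1) + 2 * m = i + 2 * (m:ℤ) * (-b) by ring] at h2
      omega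

private lemma face_drop01 {m : ℕ} {I : Finset ℕ} {d : ℤ} {v : ℤ → VecZ m}
    (hf : IsFaceD m I d v) {i i' : ℤ} (hi : FaceIdxD m I i) (hi' : FaceIdxD m I i')
    (h1 : i ≤ i') (h2 : i' ≤ i + 2 * m) (j : Fin (2 * m)) :
    v i' j = v i j ∨ v i' j = v i j - 1 := by
  have ha := hf.mono i i' hi hi' h1 j
  have hb := hf.mono i' (i + 2 * m) hi' (faceIdx_shift hi) h2 j
  have hper := hf.per i hi j
  omega

private lemma face_dual' {m : ℕ} {I : Finset ℕ} {d : ℤ} {v : ℤ → VecZ m}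
    (hf : IsFaceD m I d v) {i : ℤ} (hi : FaceIdxD m I i) (j : Fin (2 * m)) :
    v (-i) j = d - v i j.rev := by
  have h := hf.dual i hi j.rev
  rw [Fin.rev_rev] at h
  omega

private lemma face_sum {m : ℕ} {I : Finset ℕ} {d : ℤ} {v : ℤ → VecZ m}
    (hf : IsFaceD m I d v) {i : ℤ} (hi : FaceIdxD m I i) :
    (∑ j, v i j) + i = (m : ℤ) * d := by
  have h1 := hf.sumEq i (-i) hi (faceIdx_neg hi)
  have h2 : (∑ j, v i j) + (∑ j, v (-i) j) = 2 * (m : ℤ) * d := by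
    have hd : ∀ j : Fin (2 * m), v (-i) j = d - v i j.rev := face_dual' hf hi
    have : (∑ j, v (-i) j) = ∑ j : Fin (2 * m), (d - v i j.rev) :=
      Finset.sum_congr rfl (fun j _ => hd j)
    rw [this, Finset.sum_sub_distrib]
    have hrev : (∑ j : Fin (2 * m), v i j.rev) = ∑ j, v i j := by
      simpa using Equiv.sum_comp (Fin.revPerm : Equiv.Perm (Fin (2 * m))) (v i)
    rw [hrev, Finset.sum_const, Finset.card_univ, Fintype.card_fin]
    push_cast
    ring
  linarith

private lemma dvd_small_zero {n x : ℤ} (hn : 0 < n) (h : n ∣ x) (h1 : -n < x) (h2 : x < n) :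
    x = 0 := by
  obtain ⟨c, rfl⟩ := h
  rcases lt_trichotomy c 0 with hc | hc | hc
  · nlinarith
  · simp [hc]
  · nlinarith

private lemma emod_le_of_emod_eq {n A B : ℤ} (hn : 0 < n) (hA : 0 ≤ A) (h : A % n = B % n) :
    B % n ≤ A := by
  have h2 := Int.mul_ediv_add_emod A n
  have h3 : 0 ≤ A / n := Int.ediv_nonneg hA (by omega)
  have h4 : 0 ≤ n * (A / n) := mul_nonneg (by omega) h3
  omega

private lemma exists_max_below {m : ℕ} (hm : 0 < m) (I : Finset ℕ) (hI : I.Nonempty) (k : ℤ) :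
    ∃ il : ℤ, FaceIdxD m I il ∧ il < k ∧ k ≤ il + 2 * m ∧
      ∀ i, FaceIdxD m I i → i < k → i ≤ il := by
  classical
  have hn : (0:ℤ) < 2 * m := by positivity
  have hne : (2 * (m:ℤ)) ≠ 0 := by omega
  set z := k - 1 with hz
  set S : Finset ℤ := I.image (fun a : ℕ => z - ((z - (a:ℤ)) % (2*(m:ℤ))))
      ∪ I.image (fun a : ℕ => z - ((z + (a:ℤ)) % (2*(m:ℤ)))) with hS
  have hSne : S.Nonempty := by
    obtain ⟨a, ha⟩ := hI
    exact ⟨_, Finset.mem_union_left _ (Finset.mem_image_of_mem _ ha)⟩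
  set il := S.max' hSne with hil
  have hmemS : il ∈ S := S.max'_mem hSne
  have hprop : ∀ x ∈ S, FaceIdxD m I x ∧ x ≤ z ∧ z - 2*m < x := by
    intro x hx
    rw [hS, Finset.mem_union, Finset.mem_image, Finset.mem_image] at hx
    rcases hx with ⟨a, ha, rfl⟩ | ⟨a, ha, rfl⟩
    · have e1 := Int.mul_ediv_add_emod (z - a) (2*(m:ℤ))
      have e2 := Int.emod_nonneg (z - a) hne
      have e3 := Int.emod_lt_of_pos (z - a) hn
      exact ⟨⟨a, ha, (z - a)/(2*(m:ℤ)), Or.inl (by omega)⟩, by omega, by omega⟩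
    · have e1 := Int.mul_ediv_add_emod (z + a) (2*(m:ℤ))
      have e2 := Int.emod_nonneg (z + a) hne
      have e3 := Int.emod_lt_of_pos (z + a) hn
      exact ⟨⟨a, ha, (z + a)/(2*(m:ℤ)), Or.inr (by omega)⟩, by omega, by omega⟩
  obtain ⟨hface, hle, hgt⟩ := hprop il hmemS
  refine ⟨il, hface, by omega, by omega, ?_⟩
  rintro i ⟨a, ha, b, (rfl | rfl)⟩ hik
  · have hcand : z - ((z - (a:ℤ)) % (2*(m:ℤ))) ∈ S :=
      Finset.mem_union_left _ (Finset.mem_image_of_mem _ ha)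
    have hmax := S.le_max' _ hcand
    have hmod : (z - (2 * (m:ℤ) * b + a)) % (2*(m:ℤ)) = (z - (a:ℤ)) % (2*(m:ℤ)) := by
      rw [show z - (2 * (m:ℤ) * b + a) = (z - (a:ℤ)) + (2*(m:ℤ)) * (-b) by ring]
      apply Int.add_mul_emod_self_left
    have hA : 0 ≤ z - (2 * (m:ℤ) * b + a) := by omega
    have := emod_le_of_emod_eq hn hA hmod
    omega
  · have hcand : z - ((z + (a:ℤ)) % (2*(m:ℤ))) ∈ S :=
      Finset.mem_union_right _ (Finset.mem_image_of_mem _ ha)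
    have hmax := S.le_max' _ hcand
    have hmod : (z - (2 * (m:ℤ) * b - a)) % (2*(m:ℤ)) = (z + (a:ℤ)) % (2*(m:ℤ)) := by
      rw [show z - (2 * (m:ℤ) * b - a) = (z + (a:ℤ)) + (2*(m:ℤ)) * (-b) by ring]
      apply Int.add_mul_emod_self_left
    have hA : 0 ≤ z - (2 * (m:ℤ) * b - a) := by omega
    have := emod_le_of_emod_eq hn hA hmod
    omega

private lemma exists_min_above {m : ℕ} (hm : 0 < m) (I : Finset ℕ) (hI : I.Nonempty) (k : ℤ) :
    ∃ iu : ℤ, FaceIdxD m I iu ∧ k < iu ∧ iu ≤ k + 2 * m ∧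
      ∀ i, FaceIdxD m I i → k < i → iu ≤ i := by
  obtain ⟨il, h1, h2, h3, h4⟩ := exists_max_below hm I hI (-k)
  refine ⟨-il, faceIdx_neg h1, by omega, by omega, ?_⟩
  intro i hi hki
  have := h4 (-i) (faceIdx_neg hi) (by omega)
  omega

private lemma dvd_bound2 {n x : ℤ} (hn : 0 < n) (h : n ∣ x) (h1 : 0 ≤ x) (h2 : x ≤ n) :
    x = 0 ∨ x = n := by
  obtain ⟨c, rfl⟩ := h
  rcases lt_trichotomy c 0 with hc | hc | hc
  · nlinarith
  · left; simp [hc]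
  · rcases lt_trichotomy c 1 with hc1 | hc1 | hc1
    · omega
    · right; simp [hc1]
    · nlinarith

private lemma old_not_new {m : ℕ} (hm : 0 < m) {I : Finset ℕ} (hIm : ∀ a ∈ I, a ≤ m)
    {k : ℕ} (hk : k ≤ m) (hkI : k ∉ I) {i : ℤ} (hi : FaceIdxD m I i) :
    ¬ ((i - (k:ℤ)) % (2*(m:ℤ)) = 0) ∧ ¬ ((i + (k:ℤ)) % (2*(m:ℤ)) = 0) := by
  have hn : (0:ℤ) < 2 * m := by positivity
  obtain ⟨a, ha, b, (rfl | rfl)⟩ := hi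
  · have haM := hIm a ha
    constructor
    · intro hcon
      rw [show (2 * (m:ℤ) * b + (a:ℤ) - (k:ℤ)) = ((a:ℤ) - (k:ℤ)) + (2*(m:ℤ)) * b by ring,
        Int.add_mul_emod_self_left _ _ _] at hcon
      have hdvd := Int.dvd_of_emod_eq_zero hcon
      have := dvd_small_zero hn hdvd (by omega) (by omega)
      have : a = k := by omega
      exact hkI (this ▸ ha)
    · intro hcon
      rw [show (2 * (m:ℤ) * b + (a:ℤ) + (k:ℤ)) = ((a:ℤ) + (k:ℤ)) + (2*(m:ℤ)) * b by ring,
        Int.add_mul_emod_self_left _ _ _] at hcon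
      have hdvd := Int.dvd_of_emod_eq_zero hcon
      rcases dvd_bound2 hn hdvd (by omega) (by omega) with h0 | h0
      · have : a = k := by omega
        exact hkI (this ▸ ha)
      · have : a = k := by omega
        exact hkI (this ▸ ha)
  · have haM := hIm a ha
    constructor
    · intro hcon
      rw [show (2 * (m:ℤ) * b - (a:ℤ) - (k:ℤ)) = -((a:ℤ) + (k:ℤ)) + (2*(m:ℤ)) * b by ring,
        Int.add_mul_emod_self_left _ _ _] at hcon
      have hdvd := Int.dvd_of_emod_eq_zero hcon
      have hdvd2 : (2*(m:ℤ)) ∣ ((a:ℤ) + (k:ℤ)) := (dvd_neg).mp hdvd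
      rcases dvd_bound2 hn hdvd2 (by omega) (by omega) with h0 | h0
      · have : a = k := by omega
        exact hkI (this ▸ ha)
      · have : a = k := by omega
        exact hkI (this ▸ ha)
    · intro hcon
      rw [show (2 * (m:ℤ) * b - (a:ℤ) + (k:ℤ)) = ((k:ℤ) - (a:ℤ)) + (2*(m:ℤ)) * b by ring,
        Int.add_mul_emod_self_left _ _ _] at hcon
      have hdvd := Int.dvd_of_emod_eq_zero hcon
      have := dvd_small_zero hn hdvd (by omega) (by omega)
      have : a = k := by omega
      exact hkI (this ▸ ha)

end FaceUtil
section Choice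

private lemma sum_indicator_card {m : ℕ} (T : Finset (Fin (2 * m))) :
    (∑ j : Fin (2 * m), (if j ∈ T then (1:ℤ) else 0)) = (T.card : ℤ) := by
  rw [Finset.sum_ite_mem, Finset.univ_inter, Finset.sum_const]
  simp

private lemma choiceA {m : ℕ} (u w : VecZ m) (s s' : ℤ)
    (h01 : ∀ j, u j = w j ∨ u j = w j + 1)
    (hsum : (∑ j, (u j - w j)) = s') (hs0 : 0 ≤ s) (hss : s ≤ s') :
    ∃ x : VecZ m, (∀ j, w j ≤ x j ∧ x j ≤ u j) ∧ (∑ j, (u j - x j)) = s := by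
  classical
  set D := Finset.univ.filter (fun j : Fin (2 * m) => u j = w j + 1) with hD
  have hterm0 : ∀ j : Fin (2 * m), u j - w j = if j ∈ D then (1:ℤ) else 0 := by
    intro j
    simp only [hD, Finset.mem_filter, Finset.mem_univ, true_and]
    rcases h01 j with h | h
    · rw [if_neg (by omega)]; omega
    · rw [if_pos h]; omega
  have hcardD : (D.card : ℤ) = s' := by
    rw [← hsum, Finset.sum_congr rfl (fun j _ => hterm0 j), sum_indicator_card]
  have hsT : s.toNat ≤ D.card := by omega
  obtain ⟨T, hTsub, hTcard⟩ := Finset.exists_subset_card_eq hsT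
  refine ⟨fun j => if j ∈ T then w j else u j, fun j => ?_, ?_⟩
  · by_cases hj : j ∈ T
    · have hjD := hTsub hj
      simp only [hD, Finset.mem_filter, Finset.mem_univ, true_and] at hjD
      simp only [if_pos hj]
      omega
    · simp only [if_neg hj]
      rcases h01 j with h | h <;> omega
  · have hterm : ∀ j : Fin (2 * m), u j - (if j ∈ T then w j else u j) = if j ∈ T then (1:ℤ) else 0 := by
      intro j
      by_cases hj : j ∈ T
      · have hjD := hTsub hj
        simp only [hD, Finset.mem_filter, Finset.mem_univ, true_and] at hjD
        simp only [if_pos hj]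
        omega
      · simp only [if_neg hj]
        omega
    rw [Finset.sum_congr rfl (fun j _ => hterm j), sum_indicator_card, hTcard]
    omega

private lemma choiceB_x {m : ℕ} (hm : 0 < m) (u w : VecZ m) (d' : ℤ)
    (h01 : ∀ j, u j = w j ∨ u j = w j + 1)
    (hdual : ∀ j, w j = d' - u j.rev)
    (T : Finset (Fin (2 * m)))
    (hTD : ∀ j ∈ T, u j = w j + 1)
    (hTrans : ∀ j : Fin (2 * m), u j = w j + 1 → (j ∈ T ↔ ¬ j.rev ∈ T))
    (x : VecZ m) (hx : ∀ j, x j = if j ∈ T then w j else u j) :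
    (∀ j, w j ≤ x j ∧ x j ≤ u j) ∧ (∑ j, (u j - x j)) = (T.card : ℤ) ∧
      (∀ j, x j + x j.rev = d') := by
  classical
  have hur : ∀ j : Fin (2 * m), u j.rev = d' - w j := by
    intro j
    have := hdual j
    omega
  have hwr : ∀ j : Fin (2 * m), w j.rev = d' - u j := by
    intro j
    have := hdual j.rev
    rw [Fin.rev_rev] at this
    exact this
  have hDrev : ∀ j : Fin (2 * m), u j.rev = w j.rev + 1 ↔ u j = w j + 1 := by
    intro j
    rw [hur j, hwr j]
    omega
  refine ⟨fun j => ?_, ?_, fun j => ?_⟩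
  · rw [hx j]
    by_cases hj : j ∈ T
    · have := hTD j hj
      simp only [if_pos hj]
      omega
    · simp only [if_neg hj]
      rcases h01 j with h | h <;> omega
  · have hterm : ∀ j : Fin (2 * m), u j - x j = if j ∈ T then (1:ℤ) else 0 := by
      intro j
      rw [hx j]
      by_cases hj : j ∈ T
      · have := hTD j hj
        simp only [if_pos hj]
        omega
      · simp only [if_neg hj]
        omega
    rw [Finset.sum_congr rfl (fun j _ => hterm j), sum_indicator_card]
  · rcases h01 j with h | h
    · have hjT : ¬ j ∈ T := fun hc => by have := hTD j hc; omega
      have hjrD : ¬ (u j.rev = w j.rev + 1) := by rw [hDrev]; omega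
      have hjrT : ¬ j.rev ∈ T := fun hc => hjrD (hTD j.rev hc)
      rw [hx j, hx j.rev, if_neg hjT, if_neg hjrT]
      have := hur j
      omega
    · have hjrD : u j.rev = w j.rev + 1 := by rw [hDrev]; exact h
      by_cases hj : j ∈ T
      · have hjr : ¬ j.rev ∈ T := (hTrans j h).mp hj
        rw [hx j, hx j.rev, if_pos hj, if_neg hjr]
        have := hur j
        omega
      · have hjr : j.rev ∈ T := by
          have h2 := hTrans j.rev hjrD
          rw [Fin.rev_rev] at h2
          tauto
        rw [hx j, hx j.rev, if_neg hj, if_pos hjr]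
        have := hwr j
        omega

private lemma choiceB {m : ℕ} (hm : 0 < m) (u w : VecZ m) (d' e : ℤ)
    (h01 : ∀ j, u j = w j ∨ u j = w j + 1)
    (hdual : ∀ j, w j = d' - u j.rev)
    (hsum : (∑ j, (u j - w j)) = 2 * e) (he : 1 ≤ e) (γ : ZMod 2) :
    ∃ x : VecZ m, (∀ j, w j ≤ x j ∧ x j ≤ u j) ∧ (∑ j, (u j - x j)) = e ∧
      (∀ j, x j + x j.rev = d') ∧
      ((∑ j ∈ Finset.univ.filter (fun j : Fin (2 * m) => (j : ℕ) < m), x j : ℤ) : ZMod 2) = γ := by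
  classical
  set D := Finset.univ.filter (fun j : Fin (2 * m) => u j = w j + 1) with hD
  have hmemD : ∀ j : Fin (2 * m), j ∈ D ↔ u j = w j + 1 := by
    intro j
    simp only [hD, Finset.mem_filter, Finset.mem_univ, true_and]
  have hur : ∀ j : Fin (2 * m), u j.rev = d' - w j := by
    intro j
    have := hdual j
    omega
  have hwr : ∀ j : Fin (2 * m), w j.rev = d' - u j := by
    intro j
    have := hdual j.rev
    rw [Fin.rev_rev] at this
    exact this
  have hDrev : ∀ j : Fin (2 * m), j.rev ∈ D ↔ j ∈ D := by
    intro j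
    rw [hmemD, hmemD, hur j, hwr j]
    omega
  have hterm0 : ∀ j : Fin (2 * m), u j - w j = if j ∈ D then (1:ℤ) else 0 := by
    intro j
    by_cases hj : j ∈ D
    · rw [if_pos hj]
      have := (hmemD j).mp hj
      omega
    · rw [if_neg hj]
      rcases h01 j with h | h
      · omega
      · exact absurd ((hmemD j).mpr h) hj
  have hcardD : (D.card : ℤ) = 2 * e := by
    rw [← hsum, Finset.sum_congr rfl (fun j _ => hterm0 j), sum_indicator_card]
  set Dh := D.filter (fun j : Fin (2 * m) => (j : ℕ) < m) with hDh
  have himg : D.filter (fun j : Fin (2 * m) => ¬ (j : ℕ) < m) = Dh.image Fin.rev := by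
    ext j
    simp only [Finset.mem_filter, Finset.mem_image, hDh]
    constructor
    · rintro ⟨h1, h2⟩
      exact ⟨j.rev, ⟨(hDrev j).mpr h1, (rev_lt_m j).mpr h2⟩, Fin.rev_rev j⟩
    · rintro ⟨b, ⟨hb1, hb2⟩, rfl⟩
      refine ⟨(hDrev b).mpr hb1, ?_⟩
      rw [rev_lt_m]
      omega
  have hcardDh : (Dh.card : ℤ) = e := by
    have hsplit : Dh.card + (D.filter (fun j : Fin (2 * m) => ¬ (j : ℕ) < m)).card = D.card := by
      rw [hDh]
      exact Finset.card_filter_add_card_filter_not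
        (p := fun j : Fin (2 * m) => (j : ℕ) < m)
    have himgcard : (D.filter (fun j : Fin (2 * m) => ¬ (j : ℕ) < m)).card = Dh.card := by
      rw [himg, Finset.card_image_of_injective _ Fin.rev_injective]
    omega
  have hDhne : Dh.Nonempty := by
    rw [← Finset.card_pos]
    omega
  obtain ⟨j0, hj0⟩ := hDhne
  have hj0D : j0 ∈ D := (Finset.mem_filter.mp hj0).1
  have hj0m : (j0 : ℕ) < m := by
    have := (Finset.mem_filter.mp hj0).2
    simpa using this
  have hT0D : ∀ j ∈ Dh, u j = w j + 1 := by
    intro j hj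
    exact (hmemD j).mp (Finset.mem_filter.mp hj).1
  have hT0trans : ∀ j : Fin (2 * m), u j = w j + 1 → (j ∈ Dh ↔ ¬ j.rev ∈ Dh) := by
    intro j hjD
    simp only [hDh, Finset.mem_filter]
    rw [hDrev j]
    constructor
    · rintro ⟨h1, h2⟩ ⟨h3, h4⟩
      rw [rev_lt_m] at h4
      exact h4 h2
    · intro hc
      refine ⟨(hmemD j).mpr hjD, ?_⟩
      by_contra hjm
      exact hc ⟨(hmemD j).mpr hjD, (rev_lt_m j).mpr hjm⟩
  -- x0
  obtain ⟨hx0b, hx0s, hx0d⟩ := choiceB_x hm u w d' h01 hdual Dh hT0D hT0trans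
    (fun j => if j ∈ Dh then w j else u j) (fun j => rfl)
  by_cases hγ : ((∑ j ∈ Finset.univ.filter (fun j : Fin (2 * m) => (j : ℕ) < m),
      (if j ∈ Dh then w j else u j) : ℤ) : ZMod 2) = γ
  · exact ⟨_, hx0b, by rw [hx0s]; omega, hx0d, hγ⟩
  · -- x1 with T1
    set T1 := insert j0.rev (Dh.erase j0) with hT1
    have hj0rev_not : ¬ j0.rev ∈ Dh := by
      simp only [hDh, Finset.mem_filter]
      rintro ⟨_, hc⟩
      rw [rev_lt_m] at hc
      exact hc hj0m
    have hmemT1 : ∀ j : Fin (2 * m), j ∈ T1 ↔ (j = j0.rev ∨ (j ∈ Dh ∧ j ≠ j0)) := by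
      intro j
      simp only [hT1, Finset.mem_insert, Finset.mem_erase]
      tauto
    have hT1card : T1.card = Dh.card := by
      rw [hT1, Finset.card_insert_of_notMem (fun hc => hj0rev_not (Finset.mem_of_mem_erase hc)),
        Finset.card_erase_of_mem hj0]
      have : 0 < Dh.card := by omega
      omega
    have hT1D : ∀ j ∈ T1, u j = w j + 1 := by
      intro j hj
      rw [hmemT1] at hj
      rcases hj with rfl | ⟨hj, _⟩
      · exact (hmemD _).mp ((hDrev j0).mpr hj0D)
      · exact hT0D j hj
    have hT1trans : ∀ j : Fin (2 * m), u j = w j + 1 → (j ∈ T1 ↔ ¬ j.rev ∈ T1) := by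
      intro j hjD
      rw [hmemT1, hmemT1]
      by_cases hjj0 : j = j0
      · subst hjj0
        constructor
        · rintro (hc | ⟨_, hc⟩)
          · exact absurd hc.symm (rev_ne hm j)
          · exact absurd rfl hc
        · intro hc
          exact absurd (Or.inl rfl) hc
      · by_cases hjj0r : j = j0.rev
        · subst hjj0r
          rw [Fin.rev_rev]
          constructor
          · rintro _ (hc | ⟨_, hc⟩)
            · exact (rev_ne hm j0) hc.symm
            · exact hc rfl
          · intro _
            left
            rfl
        · have hjrev0 : j.rev ≠ j0.rev := fun h => hjj0 (Fin.rev_injective h)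
          have hjrevj0 : j.rev ≠ j0 := by
            intro h
            apply hjj0r
            rw [← h, Fin.rev_rev]
          have htr := hT0trans j hjD
          constructor
          · rintro (hc | ⟨hj, _⟩) hc2
            · exact hjj0r hc
            · rcases hc2 with hc2 | ⟨hc2, _⟩
              · exact hjrev0 hc2
              · exact (htr.mp hj) hc2
          · intro hc
            right
            refine ⟨?_, hjj0⟩
            rw [htr]
            intro hc2
            exact hc (Or.inr ⟨hc2, hjrevj0⟩)
    obtain ⟨hx1b, hx1s, hx1d⟩ := choiceB_x hm u w d' h01 hdual T1 hT1D hT1trans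
      (fun j => if j ∈ T1 then w j else u j) (fun j => rfl)
    refine ⟨_, hx1b, by rw [hx1s, hT1card]; omega, hx1d, ?_⟩
    -- parity flipped
    have hmem0 : j0 ∈ Finset.univ.filter (fun j : Fin (2 * m) => (j : ℕ) < m) := by
      simp only [Finset.mem_filter, Finset.mem_univ, true_and]
      exact hj0m
    have hj0T1 : ¬ j0 ∈ T1 := by
      rw [hmemT1]
      rintro (hc | ⟨_, hc⟩)
      · exact (rev_ne hm j0) hc.symm
      · exact hc rfl
    have hzero : ∀ b ∈ Finset.univ.filter (fun j : Fin (2 * m) => (j : ℕ) < m), b ≠ j0 →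
        ((if b ∈ T1 then w b else u b) - (if b ∈ Dh then w b else u b)) = 0 := by
      intro b hb hbne
      have hbm : (b : ℕ) < m := by simpa using hb
      have hbrev : b ≠ j0.rev := fun h => by
        rw [h, Fin.val_rev] at hbm
        have := j0.isLt
        omega
      have hiff : (b ∈ T1) ↔ (b ∈ Dh) := by
        rw [hmemT1]
        constructor
        · rintro (hc | ⟨hc, _⟩)
          · exact absurd hc hbrev
          · exact hc
        · intro hc
          exact Or.inr ⟨hc, hbne⟩
      by_cases hbT : b ∈ Dh
      · rw [if_pos (hiff.mpr hbT), if_pos hbT]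
        omega
      · rw [if_neg (fun hc => hbT (hiff.mp hc)), if_neg hbT]
        omega
    have hj0val : ((if j0 ∈ T1 then w j0 else u j0) - (if j0 ∈ Dh then w j0 else u j0)) = 1 := by
      rw [if_neg hj0T1, if_pos hj0]
      have := hT0D j0 hj0
      omega
    have hsum_diff := Finset.sum_eq_single_of_mem j0 hmem0 hzero
    rw [hj0val] at hsum_diff
    have hsplit : (∑ j ∈ Finset.univ.filter (fun j : Fin (2 * m) => (j : ℕ) < m),
          ((if j ∈ T1 then w j else u j) - (if j ∈ Dh then w j else u j)))
        = (∑ j ∈ Finset.univ.filter (fun j : Fin (2 * m) => (j : ℕ) < m),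
            (if j ∈ T1 then w j else u j))
          - (∑ j ∈ Finset.univ.filter (fun j : Fin (2 * m) => (j : ℕ) < m),
            (if j ∈ Dh then w j else u j)) := Finset.sum_sub_distrib _ _
    rw [hsplit] at hsum_diff
    have hdiff : (∑ j ∈ Finset.univ.filter (fun j : Fin (2 * m) => (j : ℕ) < m),
          (if j ∈ T1 then w j else u j))
        = (∑ j ∈ Finset.univ.filter (fun j : Fin (2 * m) => (j : ℕ) < m),
          (if j ∈ Dh then w j else u j)) + 1 := by omega
    rw [hdiff, Int.cast_add, Int.cast_one]
    have hz2 : ∀ a b : ZMod 2, a ≠ b → a + 1 = b := by decide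
    exact hz2 _ _ hγ

end Choice
section Extend

private lemma mul_fact1 {n c : ℤ} (hn : 0 < n) (h : n * c ≤ 0) : c ≤ 0 := by nlinarith
private lemma mul_fact2 {n c : ℤ} (hn : 0 < n) (h : 0 < n * c) : 1 ≤ c := by nlinarith
private lemma mul_fact3 {n c : ℤ} (hn : 0 < n) (h : n * c ≤ n) : c ≤ 1 := by nlinarith
private lemma mul_fact4 {n c : ℤ} (hn : 0 < n) (h : n * c < n) : c ≤ 0 := by nlinarith
private lemma mul_fact5 {n c : ℤ} (hn : 0 < n) (hc : 1 ≤ c) : n ≤ n * c := by nlinarith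

private def extV (m : ℕ) (k : ℕ) (d : ℤ) (x : VecZ m) (v : ℤ → VecZ m) : ℤ → VecZ m :=
  fun i => if (i - (k:ℤ)) % (2*(m:ℤ)) = 0 then (fun j => x j - (i - (k:ℤ)) / (2*(m:ℤ)))
    else if (i + (k:ℤ)) % (2*(m:ℤ)) = 0 then (fun j => d - x j.rev - (i + (k:ℤ)) / (2*(m:ℤ)))
    else v i

private lemma faceIdx_insert {m : ℕ} {I : Finset ℕ} {k : ℕ} (i : ℤ) :
    FaceIdxD m (insert k I) i ↔
      FaceIdxD m I i ∨ (∃ b : ℤ, i = 2*(m:ℤ)*b + k) ∨ (∃ b : ℤ, i = 2*(m:ℤ)*b - k) := by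
  constructor
  · rintro ⟨a, ha, b, (rfl | rfl)⟩
    · rcases Finset.mem_insert.mp ha with rfl | ha'
      · exact Or.inr (Or.inl ⟨b, rfl⟩)
      · exact Or.inl ⟨a, ha', b, Or.inl rfl⟩
    · rcases Finset.mem_insert.mp ha with rfl | ha'
      · exact Or.inr (Or.inr ⟨b, rfl⟩)
      · exact Or.inl ⟨a, ha', b, Or.inr rfl⟩
  · rintro (⟨a, ha, b, h⟩ | ⟨b, rfl⟩ | ⟨b, rfl⟩)
    · exact ⟨a, Finset.mem_insert_of_mem ha, b, h⟩
    · exact ⟨k, Finset.mem_insert_self k I, b, Or.inl rfl⟩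
    · exact ⟨k, Finset.mem_insert_self k I, b, Or.inr rfl⟩

private lemma master_ext {m : ℕ} (hm : 0 < m) {I : Finset ℕ}
    (hIm : ∀ a ∈ I, a ≤ m) {k : ℕ} (hk : k ≤ m) (hkI : k ∉ I)
    {d : ℤ} {v : ℤ → VecZ m} (hf : IsFaceD m I d v)
    {il iu : ℤ} (hfl : FaceIdxD m I il) (hfu : FaceIdxD m I iu)
    (hlk : il < (k:ℤ)) (hlk2 : (k:ℤ) ≤ il + 2*m) (hku : (k:ℤ) < iu)
    (hmaxl : ∀ i, FaceIdxD m I i → i < (k:ℤ) → i ≤ il)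
    (hminu : ∀ i, FaceIdxD m I i → (k:ℤ) < i → iu ≤ i)
    (hcross : 0 < k → k < m → ((0:ℕ) ∈ I ∧ m ∈ I))
    (x : VecZ m)
    (hxb : ∀ j, v iu j ≤ x j ∧ x j ≤ v il j)
    (hxs : (∑ j, (v il j - x j)) = (k:ℤ) - il)
    (hd0 : k = 0 → ∀ j, x j + x j.rev = d)
    (hdm : k = m → ∀ j, x j + x j.rev = d - 1) :
    IsFaceD m (insert k I) d (extV m k d x v) ∧
      (∀ i, FaceIdxD m I i → ∀ j, extV m k d x v i j = v i j) ∧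
      (∀ j, extV m k d x v (k : ℤ) j = x j) := by
  have hn : (0:ℤ) < 2*m := by positivity
  have hne : (2*(m:ℤ)) ≠ 0 := by omega
  -- value lemmas
  have hval1 : ∀ b : ℤ, ∀ j, extV m k d x v (2*(m:ℤ)*b + k) j = x j - b := by
    intro b j
    have hc : ((2*(m:ℤ)*b + k) - k) % (2*(m:ℤ)) = 0 := by
      rw [show (2*(m:ℤ)*b + k) - k = 2*(m:ℤ)*b by ring]
      exact Int.mul_emod_right _ _
    have hdiv : ((2*(m:ℤ)*b + k) - k) / (2*(m:ℤ)) = b := by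
      rw [show (2*(m:ℤ)*b + k) - k = 2*(m:ℤ)*b by ring]
      exact Int.mul_ediv_cancel_left _ hne
    unfold extV
    rw [if_pos hc, hdiv]
  have hval2 : ∀ b : ℤ, ∀ j, extV m k d x v (2*(m:ℤ)*b - k) j = d - x j.rev - b := by
    intro b j
    by_cases hk0 : k = 0
    · have hkz : (k:ℤ) = 0 := by exact_mod_cast hk0
      have h := hval1 b j
      rw [show 2*(m:ℤ)*b + (k:ℤ) = 2*(m:ℤ)*b - (k:ℤ) by rw [hkz]; ring] at h
      rw [h]
      have := hd0 hk0 j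
      omega
    · by_cases hkm : k = m
      · have hkz : (k:ℤ) = (m:ℤ) := by exact_mod_cast hkm
        have h := hval1 (b-1) j
        rw [show 2*(m:ℤ)*(b-1) + (k:ℤ) = 2*(m:ℤ)*b - (k:ℤ) by rw [hkz]; ring] at h
        rw [h]
        have := hdm hkm j
        omega
      · have hkk : 0 < k ∧ k < m := ⟨by omega, by omega⟩
        have hc1 : ((2*(m:ℤ)*b - k) - k) % (2*(m:ℤ)) ≠ 0 := by
          rw [show (2*(m:ℤ)*b - k) - k = (-(2*(k:ℤ))) + (2*(m:ℤ))*b by ring,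
            Int.add_mul_emod_self_left]
          have he : (-(2*(k:ℤ))) % (2*(m:ℤ)) = 2*(m:ℤ) - 2*(k:ℤ) := by
            have h1 : (-(2*(k:ℤ))) % (2*(m:ℤ)) = (2*(m:ℤ) - 2*(k:ℤ)) % (2*(m:ℤ)) := by
              rw [show 2*(m:ℤ) - 2*(k:ℤ) = -(2*(k:ℤ)) + (2*(m:ℤ))*1 by ring,
                Int.add_mul_emod_self_left]
            rw [h1]
            apply Int.emod_eq_of_lt <;> omega
          rw [he]
          omega
        have hc2 : ((2*(m:ℤ)*b - k) + k) % (2*(m:ℤ)) = 0 := by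
          rw [show (2*(m:ℤ)*b - k) + k = 2*(m:ℤ)*b by ring]
          exact Int.mul_emod_right _ _
        have hdiv : ((2*(m:ℤ)*b - k) + k) / (2*(m:ℤ)) = b := by
          rw [show (2*(m:ℤ)*b - k) + k = 2*(m:ℤ)*b by ring]
          exact Int.mul_ediv_cancel_left _ hne
        unfold extV
        rw [if_neg hc1, if_pos hc2, hdiv]
  have hval3 : ∀ i, FaceIdxD m I i → ∀ j, extV m k d x v i j = v i j := by
    intro i hi j
    obtain ⟨hc1, hc2⟩ := old_not_new hm hIm hk hkI hi
    unfold extV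
    rw [if_neg hc1, if_neg hc2]
  -- k is not an old index
  have hknot : ¬ FaceIdxD m I (k:ℤ) := by
    intro hc
    exact (old_not_new hm hIm hk hkI hc).1 (by simp)
  have hknotn : ¬ FaceIdxD m I (-(k:ℤ)) := by
    intro hc
    have := faceIdx_neg hc
    rw [neg_neg] at this
    exact hknot this
  have hgap : iu ≤ il + 2*m := by
    have h1 : FaceIdxD m I (il + 2*m) := faceIdx_shift hfl
    have h2 : (k:ℤ) < il + 2*m := by
      rcases lt_or_eq_of_le hlk2 with h | h
      · exact h
      · exact absurd (h ▸ h1) hknot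
    exact hminu _ h1 h2
  have h01 : ∀ j, v iu j = v il j ∨ v iu j = v il j - 1 :=
    face_drop01 hf hfl hfu (by omega) hgap
  have hC : (∑ j, v il j) + il = (m:ℤ) * d := face_sum hf hfl
  have hxsum : (∑ j, x j) = (m:ℤ) * d - k := by
    have h2 : (∑ j, (v il j - x j)) = (∑ j, v il j) - (∑ j, x j) := Finset.sum_sub_distrib _ _
    omega
  -- mono helpers
  have hvle : ∀ i, FaceIdxD m I i → ∀ b : ℤ, i ≤ 2*(m:ℤ)*b + k → ∀ j, x j - b ≤ v i j := by
    intro i hi b hib j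
    have hold : FaceIdxD m I (i - 2*(m:ℤ)*b) := by
      have := faceIdx_shift_mul hi (-b)
      rw [show i + 2*(m:ℤ)*(-b) = i - 2*(m:ℤ)*b by ring] at this
      exact this
    have hlt : i - 2*(m:ℤ)*b < k := by
      rcases lt_or_eq_of_le (show i - 2*(m:ℤ)*b ≤ (k:ℤ) by omega) with h | h
      · exact h
      · exact absurd (h ▸ hold) hknot
    have hmax := hmaxl _ hold hlt
    have hmono := hf.mono _ il hold hfl hmax j
    have hper := face_per_iter hf hold b j
    rw [show i - 2*(m:ℤ)*b + 2*(m:ℤ)*b = i by ring] at hper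
    have := (hxb j).2
    omega
  have hvge : ∀ i, FaceIdxD m I i → ∀ b : ℤ, 2*(m:ℤ)*b + k ≤ i → ∀ j, v i j ≤ x j - b := by
    intro i hi b hib j
    have hold : FaceIdxD m I (i - 2*(m:ℤ)*b) := by
      have := faceIdx_shift_mul hi (-b)
      rw [show i + 2*(m:ℤ)*(-b) = i - 2*(m:ℤ)*b by ring] at this
      exact this
    have hlt : (k:ℤ) < i - 2*(m:ℤ)*b := by
      rcases lt_or_eq_of_le (show (k:ℤ) ≤ i - 2*(m:ℤ)*b by omega) with h | h
      · exact h
      · exact absurd (h ▸ hold) hknot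
    have hmin := hminu _ hold hlt
    have hmono := hf.mono iu _ hfu hold hmin j
    have hper := face_per_iter hf hold b j
    rw [show i - 2*(m:ℤ)*b + 2*(m:ℤ)*b = i by ring] at hper
    have := (hxb j).1
    omega
  have hwle : ∀ i, FaceIdxD m I i → ∀ b : ℤ, i ≤ 2*(m:ℤ)*b - k → ∀ j, d - x j.rev - b ≤ v i j := by
    intro i hi b hib j
    have hold : FaceIdxD m I (i - 2*(m:ℤ)*b) := by
      have := faceIdx_shift_mul hi (-b)
      rw [show i + 2*(m:ℤ)*(-b) = i - 2*(m:ℤ)*b by ring] at this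
      exact this
    have holdn : FaceIdxD m I (-(i - 2*(m:ℤ)*b)) := faceIdx_neg hold
    have hlt : (k:ℤ) < -(i - 2*(m:ℤ)*b) := by
      rcases lt_or_eq_of_le (show (k:ℤ) ≤ -(i - 2*(m:ℤ)*b) by omega) with h | h
      · exact h
      · exact absurd (h ▸ holdn) hknot
    have hmin := hminu _ holdn hlt
    have hmono := hf.mono iu _ hfu holdn hmin j.rev
    have hdualh := hf.dual _ hold j
    have hper := face_per_iter hf hold b j
    rw [show i - 2*(m:ℤ)*b + 2*(m:ℤ)*b = i by ring] at hper
    have := (hxb j.rev).1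
    omega
  have hwge : ∀ i, FaceIdxD m I i → ∀ b : ℤ, 2*(m:ℤ)*b - k ≤ i → ∀ j, v i j ≤ d - x j.rev - b := by
    intro i hi b hib j
    have hold : FaceIdxD m I (i - 2*(m:ℤ)*b) := by
      have := faceIdx_shift_mul hi (-b)
      rw [show i + 2*(m:ℤ)*(-b) = i - 2*(m:ℤ)*b by ring] at this
      exact this
    have holdn : FaceIdxD m I (-(i - 2*(m:ℤ)*b)) := faceIdx_neg hold
    have hlt : -(i - 2*(m:ℤ)*b) < (k:ℤ) := by
      rcases lt_or_eq_of_le (show -(i - 2*(m:ℤ)*b) ≤ (k:ℤ) by omega) with h | h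
      · exact h
      · exact absurd (h ▸ holdn) hknot
    have hmax := hmaxl _ holdn hlt
    have hmono := hf.mono _ il holdn hfl hmax j.rev
    have hdualh := hf.dual _ hold j
    have hper := face_per_iter hf hold b j
    rw [show i - 2*(m:ℤ)*b + 2*(m:ℤ)*b = i by ring] at hper
    have := (hxb j.rev).2
    omega
  -- sum lemma
  have hS : ∀ i, FaceIdxD m (insert k I) i → (∑ j, extV m k d x v i j) + i = (m:ℤ) * d := by
    intro i hi
    rcases (faceIdx_insert i).mp hi with hiold | ⟨b, rfl⟩ | ⟨b, rfl⟩
    · rw [Finset.sum_congr rfl (fun j _ => hval3 i hiold j)]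
      exact face_sum hf hiold
    · rw [Finset.sum_congr rfl (fun j _ => hval1 b j), Finset.sum_sub_distrib,
        Finset.sum_const, Finset.card_univ, Fintype.card_fin, hxsum]
      push_cast
      ring
    · rw [Finset.sum_congr rfl (fun j _ => hval2 b j)]
      have hrev : (∑ j : Fin (2*m), x j.rev) = ∑ j, x j := by
        simpa using Equiv.sum_comp (Fin.revPerm : Equiv.Perm (Fin (2*m))) x
      have hsplit : (∑ j : Fin (2*m), (d - x j.rev - b)) = 2*(m:ℤ)*(d - b) - (∑ j : Fin (2*m), x j.rev) := by
        rw [show (fun j : Fin (2*m) => d - x j.rev - b) = (fun j : Fin (2*m) => (d - b) - x j.rev) from funext (fun j => by ring)]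
        rw [Finset.sum_sub_distrib, Finset.sum_const, Finset.card_univ, Fintype.card_fin]
        push_cast
        ring
      rw [hsplit, hrev, hxsum]
      ring
  -- conclusion
  refine ⟨⟨?_, ?_, ?_, ?_⟩, hval3, ?_⟩
  · -- per
    intro i hi j
    rcases (faceIdx_insert i).mp hi with hiold | ⟨b, rfl⟩ | ⟨b, rfl⟩
    · rw [hval3 i hiold j, hval3 _ (faceIdx_shift hiold) j]
      exact hf.per i hiold j
    · have h1 := hval1 b j
      have h2 := hval1 (b+1) j
      rw [show 2*(m:ℤ)*(b+1) + k = (2*(m:ℤ)*b + k) + 2*(m:ℤ) by ring] at h2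
      rw [h1, h2]
      ring
    · have h1 := hval2 b j
      have h2 := hval2 (b+1) j
      rw [show 2*(m:ℤ)*(b+1) - k = (2*(m:ℤ)*b - k) + 2*(m:ℤ) by ring] at h2
      rw [h1, h2]
      ring
  · -- mono
    intro i i' hi hi' hle j
    rcases (faceIdx_insert i).mp hi with hiold | ⟨b, rfl⟩ | ⟨b, rfl⟩ <;>
      rcases (faceIdx_insert i').mp hi' with hiold' | ⟨b', rfl⟩ | ⟨b', rfl⟩
    · rw [hval3 i hiold j, hval3 i' hiold' j]
      exact hf.mono i i' hiold hiold' hle j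
    · rw [hval3 i hiold j, hval1 b' j]
      exact hvle i hiold b' hle j
    · rw [hval3 i hiold j, hval2 b' j]
      exact hwle i hiold b' hle j
    · rw [hval1 b j, hval3 i' hiold' j]
      exact hvge i' hiold' b hle j
    · rw [hval1 b j, hval1 b' j]
      have hb : b ≤ b' := by
        have h4 : 2*(m:ℤ)*(b - b') ≤ 0 := by rw [mul_sub]; omega
        have := mul_fact1 hn h4
        omega
      omega
    · -- (+, -)
      rw [hval1 b j, hval2 b' j]
      by_cases hk0 : k = 0
      · have hkz : (k:ℤ) = 0 := by exact_mod_cast hk0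
        have hxd := hd0 hk0 j
        have hb : b ≤ b' := by
          have h4 : 2*(m:ℤ)*(b - b') ≤ 0 := by rw [mul_sub]; omega
          have := mul_fact1 hn h4
          omega
        omega
      · by_cases hkm : k = m
        · have hkz : (k:ℤ) = (m:ℤ) := by exact_mod_cast hkm
          have hxd := hdm hkm j
          have hb : b + 1 ≤ b' := by
            have h3 : 0 < 2*(m:ℤ)*(b' - b) := by rw [mul_sub]; omega
            have := mul_fact2 hn h3
            omega
          omega
        · obtain ⟨h0I, hmI⟩ := hcross (by omega) (by omega)
          have hium : iu ≤ (m:ℤ) := hminu (m:ℤ) (faceIdx_nat hmI) (by omega)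
          have hb1 : 1 ≤ b' - b := by
            apply mul_fact2 hn
            rw [mul_sub]
            omega
          have hb2 : 2*(m:ℤ) ≤ 2*(m:ℤ)*(b' - b) := mul_fact5 hn hb1
          rw [mul_sub] at hb2
          have hmid : FaceIdxD m I (iu + 2*(m:ℤ)*b) := faceIdx_shift_mul hfu b
          have hbound1 := hvge _ hmid b (by omega) j
          have hbound2 := hwle _ hmid b' (by omega) j
          omega
    · -- (-, old)
      rw [hval2 b j, hval3 i' hiold' j]
      exact hwge i' hiold' b hle j
    · -- (-, +)
      rw [hval2 b j, hval1 b' j]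
      by_cases hk0 : k = 0
      · have hkz : (k:ℤ) = 0 := by exact_mod_cast hk0
        have hxd := hd0 hk0 j
        have hb : b ≤ b' := by
          have h4 : 2*(m:ℤ)*(b - b') ≤ 0 := by rw [mul_sub]; omega
          have := mul_fact1 hn h4
          omega
        omega
      · by_cases hkm : k = m
        · have hkz : (k:ℤ) = (m:ℤ) := by exact_mod_cast hkm
          have hxd := hdm hkm j
          have hb : b - 1 ≤ b' := by
            have h2 : 2*(m:ℤ)*(b - b') ≤ 2*(m:ℤ) := by rw [mul_sub]; omega
            have := mul_fact3 hn h2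
            omega
          omega
        · obtain ⟨h0I, hmI⟩ := hcross (by omega) (by omega)
          have hb : b ≤ b' := by
            have h2 : 2*(m:ℤ)*(b - b') < 2*(m:ℤ) := by rw [mul_sub]; omega
            have := mul_fact4 hn h2
            omega
          have hb4 : 0 ≤ 2*(m:ℤ)*(b' - b) := mul_nonneg (by omega) (by omega)
          rw [mul_sub] at hb4
          have hmid : FaceIdxD m I ((0:ℤ) + 2*(m:ℤ)*b) := faceIdx_shift_mul (faceIdx_nat h0I) b
          rw [zero_add] at hmid
          have hbound1 := hwge _ hmid b (by omega) j
          have hbound2 := hvle _ hmid b' (by omega) j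
          omega
    · -- (-, -)
      rw [hval2 b j, hval2 b' j]
      have hb : b ≤ b' := by
        have h4 : 2*(m:ℤ)*(b - b') ≤ 0 := by rw [mul_sub]; omega
        have := mul_fact1 hn h4
        omega
      omega
  · -- sumEq
    intro i i' hi hi'
    have h1 := hS i hi
    have h2 := hS i' hi'
    omega
  · -- dual
    intro i hi j
    rcases (faceIdx_insert i).mp hi with hiold | ⟨b, rfl⟩ | ⟨b, rfl⟩
    · rw [hval3 i hiold j, hval3 _ (faceIdx_neg hiold) j.rev]
      exact hf.dual i hiold j
    · have h1 := hval1 b j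
      have h2 := hval2 (-b) j.rev
      rw [show 2*(m:ℤ)*(-b) - k = -(2*(m:ℤ)*b + k) by ring] at h2
      rw [h1, h2, Fin.rev_rev]
      ring
    · have h1 := hval2 b j
      have h2 := hval1 (-b) j.rev
      rw [show 2*(m:ℤ)*(-b) + k = -(2*(m:ℤ)*b - k) by ring] at h2
      rw [h1, h2]
      ring
  · -- value at k
    intro j
    have := hval1 0 j
    rw [show 2*(m:ℤ)*0 + (k:ℤ) = (k:ℤ) by ring] at this
    rw [this]
    ring

end Extend
section Base

private lemma faceIdx_full {m : ℕ} (hm : 0 < m) (i : ℤ) : FaceIdxD m (Finset.range (m+1)) i := by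
  have hn : (0:ℤ) < 2*m := by positivity
  have h0 : 0 ≤ i % (2*(m:ℤ)) := Int.emod_nonneg i (by omega)
  have h1 : i % (2*(m:ℤ)) < 2*m := Int.emod_lt_of_pos i hn
  have he := Int.mul_ediv_add_emod i (2*(m:ℤ))
  by_cases hrm : i % (2*(m:ℤ)) ≤ (m:ℤ)
  · refine ⟨(i % (2*(m:ℤ))).toNat, Finset.mem_range.mpr (by omega), i / (2*(m:ℤ)), Or.inl (by omega)⟩
  · have hmul : 2*(m:ℤ)*(i/(2*(m:ℤ)) + 1) = 2*(m:ℤ)*(i/(2*(m:ℤ))) + 2*(m:ℤ) := by ring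
    refine ⟨(2*(m:ℤ) - i % (2*(m:ℤ))).toNat, Finset.mem_range.mpr (by omega),
      i / (2*(m:ℤ)) + 1, Or.inr (by omega)⟩

private lemma base_case {m : ℕ} (hm : 2 ≤ m) (v : ℤ → VecZ m) (γ : ZMod 2)
    (hmem : MemFD m (Finset.range (m+1)) v γ) :
    ∃ (t : VecZ m) (σ : Equiv.Perm (Fin (2 * m))), InXD m t ∧ InSO m σ ∧
      (∀ i, FaceIdxD m (Finset.range (m+1)) i → ∀ j, t j + omegaD m i (σ⁻¹ j) = v i j) ∧
      epsVec m t = γ := by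
  classical
  have hm0 : 0 < m := by omega
  have hn : (0:ℤ) < 2*m := by positivity
  obtain ⟨⟨d, hf⟩, hcond⟩ := hmem
  have h0mem : (0:ℕ) ∈ Finset.range (m+1) := by simp
  have hmmem : m ∈ Finset.range (m+1) := by simp
  rw [if_pos h0mem, if_pos hmmem] at hcond
  obtain ⟨hQ, hγ⟩ := hcond
  have hidx : ∀ i : ℤ, FaceIdxD m (Finset.range (m+1)) i := faceIdx_full hm0
  have hdrop : ∀ i : ℤ, 0 ≤ i → i ≤ 2*m → ∀ j, v i j = v 0 j ∨ v i j = v 0 j - 1 :=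
    fun i h1 h2 j => face_drop01 hf (hidx 0) (hidx i) h1 (by omega) j
  have key : ∀ j : Fin (2*m), ∃ L : ℤ, 0 ≤ L ∧ L < 2*m ∧
      ∀ i : ℤ, 0 ≤ i → i ≤ 2*m → (v i j = v 0 j ↔ i ≤ L) := by
    intro j
    set S : Finset ℤ := (Finset.Icc (0:ℤ) (2*m - 1)).filter (fun i => v i j = v 0 j) with hSdef
    have h0S : (0:ℤ) ∈ S := Finset.mem_filter.mpr ⟨Finset.mem_Icc.mpr ⟨le_refl _, by omega⟩, rfl⟩
    have hSne : S.Nonempty := ⟨0, h0S⟩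
    have hmaxS : S.max' hSne ∈ S := S.max'_mem hSne
    have hmaxIcc := Finset.mem_Icc.mp (Finset.mem_filter.mp hmaxS).1
    have hvmax : v (S.max' hSne) j = v 0 j := (Finset.mem_filter.mp hmaxS).2
    refine ⟨S.max' hSne, hmaxIcc.1, by omega, ?_⟩
    intro i h1 h2
    constructor
    · intro hv
      by_cases hi2 : i ≤ 2*m - 1
      · apply S.le_max'
        simp only [hSdef, Finset.mem_filter, Finset.mem_Icc]
        exact ⟨⟨h1, hi2⟩, hv⟩
      · exfalso
        have hi2m : i = 2*(m:ℤ) := by omega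
        have hper := hf.per 0 (hidx 0) j
        rw [zero_add] at hper
        rw [hi2m, hper] at hv
        omega
    · intro hle
      have hmono1 := hf.mono i (S.max' hSne) (hidx i) (hidx _) hle j
      have hmono2 := hf.mono 0 i (hidx 0) (hidx i) h1 j
      omega
  choose L hL0 hL1 hLiff using key
  -- the permutation
  set l : Fin (2*m) → Fin (2*m) := fun j => ⟨(L j).toNat, by have := hL0 j; have := hL1 j; omega⟩
    with hldef
  have hlval : ∀ j, ((l j : ℕ) : ℤ) = L j := by
    intro j
    simp only [hldef]
    have := hL0 j
    omega
  have hinj : Function.Injective l := by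
    intro j j' hjj
    by_contra hne
    have hLL : L j = L j' := by
      rw [← hlval j, ← hlval j', hjj]
    set p := L j with hp
    have hvp : v p j = v 0 j := (hLiff j p (hL0 j) (by have := hL1 j; omega)).mpr le_rfl
    have hvp' : v p j' = v 0 j' := by
      rw [hLL]
      exact (hLiff j' (L j') (hL0 j') (by have := hL1 j'; omega)).mpr le_rfl
    have hvp1 : v (p+1) j = v 0 j - 1 := by
      rcases hdrop (p+1) (by have := hL0 j; omega) (by have := hL1 j; omega) j with h | h
      · exfalso
        have := (hLiff j (p+1) (by have := hL0 j; omega) (by have := hL1 j; omega)).mp h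
        omega
      · exact h
    have hvp1' : v (p+1) j' = v 0 j' - 1 := by
      rcases hdrop (p+1) (by have := hL0 j; omega) (by have := hL1 j; omega) j' with h | h
      · exfalso
        have := (hLiff j' (p+1) (by have := hL0 j; omega) (by have := hL1 j; omega)).mp h
        rw [← hLL] at this
        omega
      · exact h
    have hsum := hf.sumEq p (p+1) (hidx p) (hidx (p+1))
    have hterms : ∀ q : Fin (2*m), 0 ≤ v p q - v (p+1) q := by
      intro q
      have := hf.mono p (p+1) (hidx p) (hidx (p+1)) (by omega) q
      omega
    have hge2 : (v p j - v (p+1) j) + (v p j' - v (p+1) j') ≤ ∑ q, (v p q - v (p+1) q) :=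
      Finset.add_le_sum (fun q _ => hterms q) (Finset.mem_univ j) (Finset.mem_univ j') hne
    rw [Finset.sum_sub_distrib] at hge2
    omega
  have hLrev : ∀ j : Fin (2*m), L j.rev = 2*(m:ℤ) - 1 - L j := by
    intro j
    have hiffrev : ∀ i : ℤ, 0 ≤ i → i ≤ 2*m → (v i j.rev = v 0 j.rev ↔ i ≤ 2*(m:ℤ) - 1 - L j) := by
      intro i h1 h2
      have hdual1 : v (-i) j + v i j.rev = d := by
        have := hf.dual (-i) (hidx (-i)) j
        rwa [neg_neg] at this
      have hdual0 : v 0 j + v 0 j.rev = d := by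
        have := hf.dual 0 (hidx 0) j
        rwa [neg_zero] at this
      have hper : v (-i) j = v (2*(m:ℤ) - i) j + 1 := by
        have := face_per_iter hf (hidx (2*(m:ℤ) - i)) (-1) j
        rw [show 2*(m:ℤ) - i + 2*(m:ℤ)*(-1) = -i by ring] at this
        omega
      have hiff2 := hLiff j (2*(m:ℤ) - i) (by omega) (by omega)
      rcases hdrop (2*(m:ℤ) - i) (by omega) (by omega) j with h | h
      · have h3 := hiff2.mp h
        constructor
        · intro hv
          omega
        · intro hle
          exfalso
          omega
      · have h3 : ¬ (2*(m:ℤ) - i ≤ L j) := by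
          intro hc
          have := hiff2.mpr hc
          omega
        constructor
        · intro _
          omega
        · intro _
          omega
    have h1 := (hiffrev (L j.rev) (hL0 _) (by have := hL1 j.rev; omega)).mp
      ((hLiff j.rev (L j.rev) (hL0 _) (by have := hL1 j.rev; omega)).mpr le_rfl)
    have h2 := (hLiff j.rev (2*(m:ℤ) - 1 - L j) (by have := hL1 j; omega)
      (by have := hL0 j; omega)).mp
      ((hiffrev (2*(m:ℤ) - 1 - L j) (by have := hL1 j; omega) (by have := hL0 j; omega)).mpr le_rfl)
    omega
  have hbij : Function.Bijective l := Finite.injective_iff_bijective.mp hinj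
  set e : Equiv.Perm (Fin (2*m)) := Equiv.ofBijective l hbij with hedef
  have heapp : ∀ j, e j = l j := fun j => rfl
  have herev : ∀ j, e j.rev = (e j).rev := by
    intro j
    rw [heapp, heapp]
    apply Fin.ext
    rw [Fin.val_rev]
    have h1 := hlval j.rev
    have h2 := hlval j
    have h3 := hLrev j
    have h4 := hL0 j
    have h5 := hL1 j
    have h6 := (l j).isLt
    omega
  set σ : Equiv.Perm (Fin (2*m)) := e⁻¹ with hσdef
  have hσinv : ∀ j, σ⁻¹ j = l j := by
    intro j
    rw [hσdef, inv_inv]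
    exact heapp j
  -- main equation
  have hmain : ∀ i : ℤ, ∀ j, v 0 j + omegaD m i (σ⁻¹ j) = v i j := by
    intro i j
    rw [hσinv j, omegaD_eq hm0, hlval j]
    have he := Int.mul_ediv_add_emod i (2*(m:ℤ))
    have h0 : 0 ≤ i % (2*(m:ℤ)) := Int.emod_nonneg i (by omega)
    have h1 : i % (2*(m:ℤ)) < 2*m := Int.emod_lt_of_pos i hn
    set r := i % (2*(m:ℤ)) with hr
    set q := i / (2*(m:ℤ)) with hq
    have hper : v i j = v r j - q := by
      have := face_per_iter hf (hidx r) q j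
      rw [show r + 2*(m:ℤ)*q = i by omega] at this
      exact this
    have hdiv : (L j - i) / (2*(m:ℤ)) = (L j - r) / (2*(m:ℤ)) - q := by
      have hnegq : 2*(m:ℤ)*(-q) = -(2*(m:ℤ)*q) := by ring
      rw [show L j - i = (L j - r) + (2*(m:ℤ))*(-q) by omega,
        show (2*(m:ℤ))*(-q) = (-q)*(2*(m:ℤ)) by ring,
        Int.add_mul_ediv_right _ _ (show (2*(m:ℤ)) ≠ 0 by omega)]
      ring
    rw [hdiv]
    by_cases hrL : r ≤ L j
    · have hv : v r j = v 0 j := (hLiff j r h0 (by omega)).mpr hrL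
      have hz : (L j - r) / (2*(m:ℤ)) = 0 :=
        Int.ediv_eq_zero_of_lt (by omega) (by have := hL1 j; omega)
      rw [hz]
      omega
    · have hv : v r j = v 0 j - 1 := by
        rcases hdrop r h0 (by omega) j with h | h
        · exact absurd ((hLiff j r h0 (by omega)).mp h) hrL
        · exact h
      have hz : (L j - r) / (2*(m:ℤ)) = -1 :=
        ediv_neg_one hn (by have := hL0 j; omega) (by omega)
      rw [hz]
      omega
  -- sign
  have hsign : Equiv.Perm.sign e = 1 := by
    have hQ2 := hQ.2
    have hvm : ∀ j : Fin (2*m), (j:ℕ) < m →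
        muFaceD m v 0 j - muFaceD m v (m:ℤ) j = if (m:ℤ) ≤ L j then (-1:ℤ) else 0 := by
      intro j hj
      have hω0 := omegaD_zero hm0 j
      have hωm := omegaD_nat hm0 (show m < 2*m by omega) j
      unfold muFaceD
      rw [hω0, hωm, if_pos hj]
      by_cases hc : (m:ℤ) ≤ L j
      · have := (hLiff j m (by omega) (by omega)).mpr hc
        rw [if_pos hc]
        omega
      · have : v (m:ℤ) j = v 0 j - 1 := by
          rcases hdrop m (by omega) (by omega) j with h | h
          · exact absurd ((hLiff j m (by omega) (by omega)).mp h) hc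
          · exact h
        rw [if_neg hc]
        omega
    have hsum : (∑ j ∈ Finset.univ.filter (fun j : Fin (2*m) => (j:ℕ) < m),
        (muFaceD m v 0 j - muFaceD m v (m:ℤ) j))
        = -((Finset.univ.filter (fun j : Fin (2*m) => (j:ℕ) < m ∧ ¬ ((e j : Fin (2*m)):ℕ) < m)).card : ℤ) := by
      rw [Finset.sum_congr rfl (fun j hj => hvm j (by simpa using hj))]
      rw [Finset.sum_ite, Finset.sum_const, Finset.sum_const_zero, add_zero]
      have hset : (Finset.univ.filter (fun j : Fin (2*m) => (j:ℕ) < m)).filter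
          (fun j => (m:ℤ) ≤ L j)
          = Finset.univ.filter (fun j : Fin (2*m) => (j:ℕ) < m ∧ ¬ ((e j : Fin (2*m)):ℕ) < m) := by
        ext j
        simp only [Finset.mem_filter, Finset.mem_univ, true_and]
        have h1 := hlval j
        have h2 := heapp j
        constructor
        · rintro ⟨ha, hb⟩
          refine ⟨ha, ?_⟩
          rw [h2]
          intro hc
          have : ((l j : ℕ):ℤ) < m := by exact_mod_cast hc
          omega
        · rintro ⟨ha, hb⟩
          refine ⟨ha, ?_⟩
          rw [h2] at hb
          have : ¬ (((l j : ℕ):ℤ) < m) := fun hc => hb (by exact_mod_cast hc)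
          omega
      rw [hset]
      simp
    have heven : Even ((Finset.univ.filter (fun j : Fin (2*m) => (j:ℕ) < m ∧ ¬ ((e j : Fin (2*m)):ℕ) < m)).card) := by
      obtain ⟨c, hc⟩ := hQ2
      rw [hsum] at hc
      have : Even ((Finset.univ.filter (fun j : Fin (2*m) => (j:ℕ) < m ∧ ¬ ((e j : Fin (2*m)):ℕ) < m)).card : ℤ) := by
        exact ⟨-c, by omega⟩
      exact (Int.even_coe_nat _).mp this
    rw [sign_flips hm0 _ e herev rfl]
    exact Even.neg_one_pow heven
  refine ⟨v 0, σ, ?_, ⟨?_, inv_rev_equivariant herev⟩, fun i _ j => hmain i j, ?_⟩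
  · intro j j'
    have h1 : v 0 j + v 0 j.rev = d := by
      have := hf.dual 0 (hidx 0) j
      rwa [neg_zero] at this
    have h2 : v 0 j' + v 0 j'.rev = d := by
      have := hf.dual 0 (hidx 0) j'
      rwa [neg_zero] at this
    omega
  · rw [hσdef]
    rw [Equiv.Perm.sign_inv]
    exact hsign
  · rw [hγ]
    unfold epsVec
    congr 1
    apply Finset.sum_congr rfl
    intro j _
    show v 0 j = v 0 j - omegaD m 0 j
    rw [omegaD_zero hm0]
    ring

end Base
section ExtSites

private lemma faceIdx_mono {m : ℕ} {I : Finset ℕ} {k : ℕ} {i : ℤ} (h : FaceIdxD m I i) :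
    FaceIdxD m (insert k I) i := by
  obtain ⟨a, ha, b, hb⟩ := h
  exact ⟨a, Finset.mem_insert_of_mem ha, b, hb⟩

private lemma omegam_pair {m : ℕ} (hm0 : 0 < m) (j : Fin (2 * m)) :
    omegaD m (m : ℤ) j + omegaD m (m : ℤ) j.rev = -1 := by
  rw [omegaD_nat hm0 (by omega) j, omegaD_nat hm0 (by omega) j.rev]
  have := rev_lt_m j
  split_ifs <;> omega

private lemma not_faceIdx_k {m : ℕ} (hm0 : 0 < m) {I : Finset ℕ} (hIm : ∀ a ∈ I, a ≤ m)
    {k : ℕ} (hk : k ≤ m) (hkI : k ∉ I) : ¬ FaceIdxD m I (k : ℤ) := by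
  intro hc
  exact (old_not_new hm0 hIm hk hkI hc).1 (by simp)

private lemma gap_bound {m : ℕ} (hm0 : 0 < m) {I : Finset ℕ} (hIm : ∀ a ∈ I, a ≤ m)
    {k : ℕ} (hk : k ≤ m) (hkI : k ∉ I) {il iu : ℤ}
    (hfl : FaceIdxD m I il) (hlk2 : (k:ℤ) ≤ il + 2*m)
    (hminu : ∀ i, FaceIdxD m I i → (k:ℤ) < i → iu ≤ i) : iu ≤ il + 2*m := by
  have h1 : FaceIdxD m I (il + 2*m) := faceIdx_shift hfl
  have h2 : (k:ℤ) < il + 2*m := by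
    rcases lt_or_eq_of_le hlk2 with h | h
    · exact h
    · exact absurd (h ▸ h1) (not_faceIdx_k hm0 hIm hk hkI)
  exact hminu _ h1 h2

private lemma drop_sum {m : ℕ} {I : Finset ℕ} {d : ℤ} {v : ℤ → VecZ m}
    (hf : IsFaceD m I d v) {il iu : ℤ} (hfl : FaceIdxD m I il) (hfu : FaceIdxD m I iu)
    (h1 : il ≤ iu) (h2 : iu ≤ il + 2*m) :
    (∀ j, v il j = v iu j ∨ v il j = v iu j + 1) ∧
      (∑ j, (v il j - v iu j)) = iu - il := by
  constructor
  · intro j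
    rcases face_drop01 hf hfl hfu h1 h2 j with h | h <;> omega
  · have := hf.sumEq il iu hfl hfu
    rw [Finset.sum_sub_distrib]
    omega

private lemma card_lt_half {m : ℕ} :
    (Finset.univ.filter (fun j : Fin (2 * m) => (j : ℕ) < m)).card = m := by
  have himg : Finset.univ.filter (fun j : Fin (2 * m) => (j : ℕ) < m) =
      (Finset.univ : Finset (Fin m)).image (fun j : Fin m => (⟨(j : ℕ), by omega⟩ : Fin (2 * m))) := by
    ext j
    rw [Finset.mem_filter, Finset.mem_image]
    constructor
    · rintro ⟨-, hj⟩
      exact ⟨⟨(j : ℕ), hj⟩, Finset.mem_univ _, Fin.ext rfl⟩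
    · rintro ⟨b, -, rfl⟩
      exact ⟨Finset.mem_univ _, b.isLt⟩
  rw [himg, Finset.card_image_of_injective _ (fun a b hab => Fin.ext (by
      have := congrArg (fun z : Fin (2 * m) => (z : ℕ)) hab
      simpa using this)), Finset.card_univ, Fintype.card_fin]

private lemma eps_as_sum {m : ℕ} (hm0 : 0 < m) (y : VecZ m) :
    epsVec m (fun j => y j - omegaD m 0 j) =
      ((∑ j ∈ Finset.univ.filter (fun j : Fin (2 * m) => (j : ℕ) < m), y j : ℤ) : ZMod 2) := by
  unfold epsVec
  congr 1
  apply Finset.sum_congr rfl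
  intro j _
  show y j - omegaD m 0 j = y j
  rw [omegaD_zero hm0]
  ring

private lemma ext_zero {m : ℕ} (hm : 2 ≤ m) {I : Finset ℕ} (hI : I.Nonempty)
    (hIm : ∀ a ∈ I, a ≤ m) (h0I : (0:ℕ) ∉ I)
    (v : ℤ → VecZ m) (γ : ZMod 2) (hmem : MemFD m I v γ) :
    ∃ v', (∀ i, FaceIdxD m I i → ∀ j, v' i j = v i j) ∧ MemFD m (insert 0 I) v' γ := by
  have hm0 : 0 < m := by omega
  obtain ⟨⟨d, hf⟩, hcond⟩ := hmem
  obtain ⟨il, hfl, hlk, hlk2, hmaxl⟩ := exists_max_below hm0 I hI 0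
  obtain ⟨iu, hfu, hku, hku2, hminu⟩ := exists_min_above hm0 I hI 0
  have hgap : iu ≤ il + 2*m :=
    gap_bound hm0 hIm (by omega) h0I hfl (by push_cast; omega)
      (by intro i hi h; exact hminu i hi (by exact_mod_cast h))
  have hiuil : iu = -il := by
    have h1 : iu ≤ -il := hminu (-il) (faceIdx_neg hfl) (by omega)
    have h2 : -iu ≤ il := hmaxl (-iu) (faceIdx_neg hfu) (by omega)
    omega
  obtain ⟨h01, hsum⟩ := drop_sum hf hfl hfu (by omega) hgap
  have hdualw : ∀ j, v iu j = d - v il j.rev := by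
    intro j
    rw [hiuil]
    exact face_dual' hf hfl j
  obtain ⟨x, hxb, hxs, hxd, hxp⟩ := choiceB hm0 (v il) (v iu) d iu h01 hdualw (by omega) (by omega) γ
  obtain ⟨hface', hold, hvk⟩ := master_ext hm0 hIm (by omega : (0:ℕ) ≤ m) h0I hf hfl hfu
    (by push_cast; omega) (by push_cast; omega) (by push_cast; omega)
    (by intro i hi h; exact hmaxl i hi (by exact_mod_cast h))
    (by intro i hi h; exact hminu i hi (by exact_mod_cast h))
    (fun h _ => absurd h (by omega)) x hxb
    (by push_cast; omega)
    (fun _ j => hxd j) (fun h => absurd h (by omega))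
  refine ⟨extV m 0 d x v, hold, ⟨d, hface'⟩, ?_⟩
  rw [if_pos (Finset.mem_insert_self 0 I)]
  have hvk0 : ∀ j, extV m 0 d x v 0 j = x j := by
    intro j
    have := hvk j
    rwa [Nat.cast_zero] at this
  have hmu0 : (fun j => muFaceD m (extV m 0 d x v) 0 j) = (fun j => x j - omegaD m 0 j) :=
    funext (fun j => by unfold muFaceD; rw [hvk0 j])
  have heps0 : epsVec m (fun j => muFaceD m (extV m 0 d x v) 0 j) = γ := by
    rw [hmu0, eps_as_sum hm0 x]
    exact hxp
  by_cases hmI : m ∈ I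
  · rw [if_pos (Finset.mem_insert_of_mem hmI)]
    rw [if_neg h0I, if_pos hmI] at hcond
    have hmidx : FaceIdxD m I (m:ℤ) := faceIdx_nat hmI
    have hvm : ∀ j, v (m:ℤ) j + v (m:ℤ) j.rev = d - 1 := by
      intro j
      have h1 := hf.dual (m:ℤ) hmidx j
      have h2 : v (-(m:ℤ)) j.rev = v (m:ℤ) j.rev + 1 := by
        have := face_per_iter hf hmidx (-1) j.rev
        rw [show (m:ℤ) + 2*(m:ℤ)*(-1) = -(m:ℤ) by ring] at this
        omega
      omega
    have holdm : ∀ j, extV m 0 d x v (m:ℤ) j = v (m:ℤ) j := fun j => hold (m:ℤ) hmidx j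
    refine ⟨⟨?_, ?_⟩, heps0.symm⟩
    · intro j
      have hωm := omegam_pair hm0 j
      have hω0 : omegaD m 0 j = 0 := omegaD_zero hm0 j
      have hω0r : omegaD m 0 j.rev = 0 := omegaD_zero hm0 j.rev
      show (muFaceD m (extV m 0 d x v) 0 j - muFaceD m (extV m 0 d x v) (m:ℤ) j) +
        (muFaceD m (extV m 0 d x v) 0 j.rev - muFaceD m (extV m 0 d x v) (m:ℤ) j.rev) = 0
      unfold muFaceD
      rw [hvk0 j, hvk0 j.rev, holdm j, holdm j.rev]
      have := hxd j
      have := hvm j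
      omega
    · have he1 : (∑ j ∈ Finset.univ.filter (fun j : Fin (2*m) => (j:ℕ) < m),
          (muFaceD m (extV m 0 d x v) 0 j - muFaceD m (extV m 0 d x v) (m:ℤ) j))
          = (∑ j ∈ Finset.univ.filter (fun j : Fin (2*m) => (j:ℕ) < m), x j)
            - (∑ j ∈ Finset.univ.filter (fun j : Fin (2*m) => (j:ℕ) < m), muFaceD m v (m:ℤ) j) := by
        rw [← Finset.sum_sub_distrib]
        apply Finset.sum_congr rfl
        intro j _
        show (muFaceD m (extV m 0 d x v) 0 j - muFaceD m (extV m 0 d x v) (m:ℤ) j)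
          = x j - muFaceD m v (m:ℤ) j
        unfold muFaceD
        rw [hvk0 j, holdm j, omegaD_zero hm0 j]
        ring
      show Even (∑ j ∈ Finset.univ.filter (fun j : Fin (2*m) => (j:ℕ) < m),
        (muFaceD m (extV m 0 d x v) 0 j - muFaceD m (extV m 0 d x v) (m:ℤ) j))
      rw [he1]
      apply even_of_cast_eq
      rw [hxp, hcond]
      unfold epsVec
      rfl
  · have hmnot : m ∉ insert 0 I := by
      intro hc
      rcases Finset.mem_insert.mp hc with h | h
      · omega
      · exact hmI h
    rw [if_neg hmnot]
    exact heps0.symm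

private lemma ext_m {m : ℕ} (hm : 2 ≤ m) {I : Finset ℕ}
    (hIm : ∀ a ∈ I, a ≤ m) (hmI : m ∉ I) (h0I : (0:ℕ) ∈ I)
    (v : ℤ → VecZ m) (γ : ZMod 2) (hmem : MemFD m I v γ) :
    ∃ v', (∀ i, FaceIdxD m I i → ∀ j, v' i j = v i j) ∧ MemFD m (insert m I) v' γ := by
  have hm0 : 0 < m := by omega
  have hI : I.Nonempty := ⟨0, h0I⟩
  obtain ⟨⟨d, hf⟩, hcond⟩ := hmem
  rw [if_pos h0I, if_neg hmI] at hcond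
  obtain ⟨il, hfl, hlk, hlk2, hmaxl⟩ := exists_max_below hm0 I hI (m:ℤ)
  obtain ⟨iu, hfu, hku, hku2, hminu⟩ := exists_min_above hm0 I hI (m:ℤ)
  have hgap : iu ≤ il + 2*m := gap_bound hm0 hIm le_rfl hmI hfl hlk2 hminu
  have hiuil : iu = 2*(m:ℤ) - il := by
    have ha : FaceIdxD m I (2*(m:ℤ) - il) := by
      have := faceIdx_shift (faceIdx_neg hfl)
      rwa [show -il + 2*(m:ℤ) = 2*(m:ℤ) - il by ring] at this
    have hb : FaceIdxD m I (2*(m:ℤ) - iu) := by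
      have := faceIdx_shift (faceIdx_neg hfu)
      rwa [show -iu + 2*(m:ℤ) = 2*(m:ℤ) - iu by ring] at this
    have h1 : iu ≤ 2*(m:ℤ) - il := hminu _ ha (by omega)
    have h2 : 2*(m:ℤ) - iu ≤ il := hmaxl _ hb (by omega)
    omega
  obtain ⟨h01, hsum⟩ := drop_sum hf hfl hfu (by omega) hgap
  have hdualw : ∀ j, v iu j = (d - 1) - v il j.rev := by
    intro j
    rw [hiuil]
    have h1 : v (2*(m:ℤ) - il) j = v (-il) j - 1 := by
      have := face_per_iter hf (faceIdx_neg hfl) 1 j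
      rw [show -il + 2*(m:ℤ)*1 = 2*(m:ℤ) - il by ring] at this
      omega
    rw [h1, face_dual' hf hfl j]
    ring
  set S0 : ℤ := ∑ j ∈ Finset.univ.filter (fun j : Fin (2*m) => (j:ℕ) < m), muFaceD m v 0 j with hS0
  obtain ⟨x, hxb, hxs, hxd, hxp⟩ := choiceB hm0 (v il) (v iu) (d-1) ((m:ℤ) - il)
    h01 hdualw (by omega) (by omega) (((S0 - (m:ℤ)) : ℤ) : ZMod 2)
  obtain ⟨hface', hold, hvk⟩ := master_ext hm0 hIm le_rfl hmI hf hfl hfu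
    hlk hlk2 hku hmaxl hminu (fun _ h => absurd h (by omega)) x hxb
    (by omega)
    (fun h => absurd h (by omega)) (fun _ j => hxd j)
  refine ⟨extV m m d x v, hold, ⟨d, hface'⟩, ?_⟩
  rw [if_pos (Finset.mem_insert_of_mem h0I), if_pos (Finset.mem_insert_self m I)]
  have h0idx : FaceIdxD m I 0 := by
    have := faceIdx_nat (m := m) h0I
    rwa [Nat.cast_zero] at this
  have hold0 : ∀ j, extV m m d x v 0 j = v 0 j := fun j => hold 0 h0idx j
  have hmu0 : (fun j => muFaceD m (extV m m d x v) 0 j) = (fun j => muFaceD m v 0 j) :=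
    funext (fun j => by unfold muFaceD; rw [hold0 j])
  refine ⟨⟨?_, ?_⟩, ?_⟩
  · intro j
    have hωm := omegam_pair hm0 j
    have hω0 : omegaD m 0 j = 0 := omegaD_zero hm0 j
    have hω0r : omegaD m 0 j.rev = 0 := omegaD_zero hm0 j.rev
    have hv0 : v 0 j + v 0 j.rev = d := by
      have := hf.dual 0 h0idx j
      rwa [neg_zero] at this
    show (muFaceD m (extV m m d x v) 0 j - muFaceD m (extV m m d x v) (m:ℤ) j) +
      (muFaceD m (extV m m d x v) 0 j.rev - muFaceD m (extV m m d x v) (m:ℤ) j.rev) = 0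
    unfold muFaceD
    rw [hold0 j, hold0 j.rev, hvk j, hvk j.rev]
    have := hxd j
    omega
  · have hsplitμ : (∑ j ∈ Finset.univ.filter (fun j : Fin (2*m) => (j:ℕ) < m),
        (muFaceD m (extV m m d x v) 0 j - muFaceD m (extV m m d x v) (m:ℤ) j))
        = (∑ j ∈ Finset.univ.filter (fun j : Fin (2*m) => (j:ℕ) < m), muFaceD m v 0 j)
          - ((∑ j ∈ Finset.univ.filter (fun j : Fin (2*m) => (j:ℕ) < m), x j) + m) := by
      have hterm : ∀ j ∈ Finset.univ.filter (fun j : Fin (2*m) => (j:ℕ) < m),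
          muFaceD m (extV m m d x v) 0 j - muFaceD m (extV m m d x v) (m:ℤ) j
          = muFaceD m v 0 j - (x j + 1) := by
        intro j hj
        have hjm : (j:ℕ) < m := by simpa using hj
        unfold muFaceD
        rw [hold0 j, hvk j, omegaD_nat hm0 (by omega) j, if_pos hjm]
        ring
      rw [Finset.sum_congr rfl hterm, Finset.sum_sub_distrib, Finset.sum_add_distrib,
        Finset.sum_const, card_lt_half, nsmul_eq_mul, mul_one]
    show Even (∑ j ∈ Finset.univ.filter (fun j : Fin (2*m) => (j:ℕ) < m),
      (muFaceD m (extV m m d x v) 0 j - muFaceD m (extV m m d x v) (m:ℤ) j))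
    rw [hsplitμ]
    have hcast : (((∑ j ∈ Finset.univ.filter (fun j : Fin (2*m) => (j:ℕ) < m), x j) + (m:ℤ) : ℤ)
        : ZMod 2) = ((S0 : ℤ) : ZMod 2) := by
      rw [Int.cast_add, hxp, Int.cast_sub]
      ring
    exact even_of_cast_eq hcast.symm
  · rw [hmu0]
    exact hcond

private lemma ext_generic {m : ℕ} (hm : 2 ≤ m) {I : Finset ℕ} (hIm : ∀ a ∈ I, a ≤ m)
    (h0I : (0:ℕ) ∈ I) (hmI : m ∈ I) {k : ℕ} (hk0 : 0 < k) (hkm : k < m) (hkI : k ∉ I)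
    (v : ℤ → VecZ m) (γ : ZMod 2) (hmem : MemFD m I v γ) :
    ∃ v', (∀ i, FaceIdxD m I i → ∀ j, v' i j = v i j) ∧ MemFD m (insert k I) v' γ := by
  have hm0 : 0 < m := by omega
  have hI : I.Nonempty := ⟨0, h0I⟩
  obtain ⟨⟨d, hf⟩, hcond⟩ := hmem
  obtain ⟨il, hfl, hlk, hlk2, hmaxl⟩ := exists_max_below hm0 I hI (k:ℤ)
  obtain ⟨iu, hfu, hku, hku2, hminu⟩ := exists_min_above hm0 I hI (k:ℤ)
  have hgap : iu ≤ il + 2*m := gap_bound hm0 hIm (by omega) hkI hfl hlk2 hminu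
  obtain ⟨h01, hsum⟩ := drop_sum hf hfl hfu (by omega) hgap
  obtain ⟨x, hxb, hxs⟩ := choiceA (v il) (v iu) ((k:ℤ) - il) (iu - il) h01
    (by omega) (by omega) (by omega)
  obtain ⟨hface', hold, hvk⟩ := master_ext hm0 hIm (by omega) hkI hf hfl hfu
    hlk hlk2 hku hmaxl hminu (fun _ _ => ⟨h0I, hmI⟩) x hxb (by omega)
    (fun h => absurd h (by omega)) (fun h => absurd h (by omega))
  refine ⟨extV m k d x v, hold, ⟨d, hface'⟩, ?_⟩
  have h0in : (0:ℕ) ∈ insert k I := Finset.mem_insert_of_mem h0I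
  have hmin : m ∈ insert k I := Finset.mem_insert_of_mem hmI
  rw [if_pos h0in, if_pos hmin]
  rw [if_pos h0I, if_pos hmI] at hcond
  have h0idx : FaceIdxD m I 0 := by
    have := faceIdx_nat (m := m) h0I
    rwa [Nat.cast_zero] at this
  have hmidx : FaceIdxD m I (m:ℤ) := faceIdx_nat hmI
  have hmu0 : (fun j => muFaceD m (extV m k d x v) 0 j) = (fun j => muFaceD m v 0 j) :=
    funext (fun j => by unfold muFaceD; rw [hold 0 h0idx j])
  have hmum : (fun j => muFaceD m (extV m k d x v) (m:ℤ) j) = (fun j => muFaceD m v (m:ℤ) j) :=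
    funext (fun j => by unfold muFaceD; rw [hold (m:ℤ) hmidx j])
  constructor
  · have : (fun j => muFaceD m (extV m k d x v) 0 j - muFaceD m (extV m k d x v) (m:ℤ) j)
        = (fun j => muFaceD m v 0 j - muFaceD m v (m:ℤ) j) := by
      funext j
      unfold muFaceD
      rw [hold 0 h0idx j, hold (m:ℤ) hmidx j]
    rw [this]
    exact hcond.1
  · rw [hmu0]
    exact hcond.2

end ExtSites
section Assemble

private lemma surj_step {m : ℕ} (hm : 2 ≤ m) :
    ∀ n : ℕ, ∀ I : Finset ℕ, (0:ℕ) ∈ I → m ∈ I → (∀ a ∈ I, a ≤ m) →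
      ((Finset.range (m+1)) \ I).card = n →
      ∀ v γ, MemFD m I v γ →
      ∃ (t : VecZ m) (σ : Equiv.Perm (Fin (2 * m))), InXD m t ∧ InSO m σ ∧
        (∀ i, FaceIdxD m I i → ∀ j, t j + omegaD m i (σ⁻¹ j) = v i j) ∧ epsVec m t = γ := by
  intro n
  induction n with
  | zero =>
    intro I h0 hmI hIm hcard v γ hmem
    have hIeq : I = Finset.range (m+1) := by
      apply Finset.Subset.antisymm
      · intro a ha
        exact Finset.mem_range.mpr (by have := hIm a ha; omega)
      · intro a ha
        by_contra hc
        have hmem2 : a ∈ (Finset.range (m+1)) \ I := Finset.mem_sdiff.mpr ⟨ha, hc⟩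
        rw [Finset.card_eq_zero] at hcard
        rw [hcard] at hmem2
        exact absurd hmem2 (Finset.notMem_empty a)
    subst hIeq
    exact base_case hm v γ hmem
  | succ n ih =>
    intro I h0 hmI hIm hcard v γ hmem
    have hne : ((Finset.range (m+1)) \ I).Nonempty := by
      rw [← Finset.card_pos, hcard]
      omega
    obtain ⟨k, hk⟩ := hne
    have hkd := Finset.mem_sdiff.mp hk
    have hkr : k < m + 1 := Finset.mem_range.mp hkd.1
    have hkI : k ∉ I := hkd.2
    have hk0 : 0 < k := by
      rcases Nat.eq_zero_or_pos k with h | h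
      · exact absurd (h ▸ h0) hkI
      · exact h
    have hkm : k < m := by
      rcases Nat.lt_or_ge k m with h | h
      · exact h
      · have : k = m := by omega
        exact absurd (this ▸ hmI) hkI
    obtain ⟨v', hold, hmem'⟩ := ext_generic hm hIm h0 hmI hk0 hkm hkI v γ hmem
    have hcard' : ((Finset.range (m+1)) \ insert k I).card = n := by
      have hset : (Finset.range (m+1)) \ insert k I = ((Finset.range (m+1)) \ I).erase k := by
        ext a
        simp only [Finset.mem_sdiff, Finset.mem_erase, Finset.mem_insert]
        tauto
      rw [hset, Finset.card_erase_of_mem hk, hcard]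
      omega
    obtain ⟨t, σ, h1, h2, h3, h4⟩ := ih (insert k I) (Finset.mem_insert_of_mem h0)
      (Finset.mem_insert_of_mem hmI)
      (by
        intro a ha
        rcases Finset.mem_insert.mp ha with rfl | ha'
        · omega
        · exact hIm a ha') hcard' v' γ hmem'
    refine ⟨t, σ, h1, h2, ?_, h4⟩
    intro i hi j
    rw [← hold i hi j]
    exact h3 i (faceIdx_mono hi) j

private lemma part3aux {m : ℕ} (hm : 2 ≤ m) (I : Finset ℕ)
    (hIm : ∀ a ∈ I, a ≤ m) (h0I : (0:ℕ) ∈ I)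
    (v : ℤ → VecZ m) (γ : ZMod 2) (hmem : MemFD m I v γ) :
    ∃ (t : VecZ m) (σ : Equiv.Perm (Fin (2 * m))), InXD m t ∧ InSO m σ ∧
      (∀ i, FaceIdxD m I i → ∀ j, t j + omegaD m i (σ⁻¹ j) = v i j) ∧ epsVec m t = γ := by
  by_cases hmI : m ∈ I
  · exact surj_step hm _ I h0I hmI hIm rfl v γ hmem
  · obtain ⟨v1, hold1, hmem1⟩ := ext_m hm hIm hmI h0I v γ hmem
    obtain ⟨t, σ, h1, h2, h3, h4⟩ := surj_step hm _ (insert m I)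
      (Finset.mem_insert_of_mem h0I) (Finset.mem_insert_self m I)
      (by
        intro a ha
        rcases Finset.mem_insert.mp ha with rfl | ha'
        · exact le_rfl
        · exact hIm a ha') rfl v1 γ hmem1
    refine ⟨t, σ, h1, h2, ?_, h4⟩
    intro i hi j
    rw [← hold1 i hi j]
    exact h3 i (faceIdx_mono hi) j

private lemma part3lem {m : ℕ} (hm : 2 ≤ m) (I : Finset ℕ) (hI : I.Nonempty)
    (hIm : ∀ a ∈ I, a ≤ m)
    (v : ℤ → VecZ m) (γ : ZMod 2) (hmem : MemFD m I v γ) :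
    ∃ (t : VecZ m) (σ : Equiv.Perm (Fin (2 * m))), InXD m t ∧ InSO m σ ∧
      (∀ i, FaceIdxD m I i → ∀ j, t j + omegaD m i (σ⁻¹ j) = v i j) ∧ epsVec m t = γ := by
  by_cases h0I : (0:ℕ) ∈ I
  · exact part3aux hm I hIm h0I v γ hmem
  · obtain ⟨v1, hold1, hmem1⟩ := ext_zero hm hI hIm h0I v γ hmem
    obtain ⟨t, σ, h1, h2, h3, h4⟩ := part3aux hm (insert 0 I)
      (by
        intro a ha
        rcases Finset.mem_insert.mp ha with rfl | ha'
        · omega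
        · exact hIm a ha')
      (Finset.mem_insert_self 0 I) v1 γ hmem1
    refine ⟨t, σ, h1, h2, ?_, h4⟩
    intro i hi j
    rw [← hold1 i hi j]
    exact h3 i (faceIdx_mono hi) j

end Assemble
theorem statement17 (m : ℕ) (hm : 2 ≤ m)
    (I : Finset ℕ) (hI : I.Nonempty) (hIm : ∀ a ∈ I, a ≤ m)
    (h1I : 1 ∈ I → 0 ∈ I) (h2I : m - 1 ∈ I → m ∈ I) :
    -- every element of `W_{I,D_m}` fixes `(ω_I, 0) ∈ F_{I,D_m}`
    (∀ (tx : VecZ m) (σx : Equiv.Perm (Fin (2 * m))),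
      InXD m tx → InSO m σx → MemWI m I tx σx →
        (∀ i, FaceIdxD m I i → ∀ j, tx j + omegaD m i (σx⁻¹ j) = omegaD m i j) ∧
        epsVec m tx = 0) ∧
    -- the induced map `f` is injective: `f w = f w'` iff `w` and `w'` lie in the
    -- same left `W_{I,D_m}`-coset
    (∀ (t : VecZ m) (σ : Equiv.Perm (Fin (2 * m)))
        (t' : VecZ m) (σ' : Equiv.Perm (Fin (2 * m))),
      InXD m t → InSO m σ → InXD m t' → InSO m σ' →
        (((∀ i, FaceIdxD m I i → ∀ j,
              t j + omegaD m i (σ⁻¹ j) = t' j + omegaD m i (σ'⁻¹ j)) ∧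
            epsVec m t = epsVec m t') ↔
          (∃ (tx : VecZ m) (σx : Equiv.Perm (Fin (2 * m))),
            InXD m tx ∧ InSO m σx ∧ MemWI m I tx σx ∧
              (∀ j, t' j = t j + tx (σ⁻¹ j)) ∧ σ' = σ * σx))) ∧
    -- the induced map `f` is surjective
    (∀ (v : ℤ → VecZ m) (γ : ZMod 2), MemFD m I v γ →
      ∃ (t : VecZ m) (σ : Equiv.Perm (Fin (2 * m))),
        InXD m t ∧ InSO m σ ∧
          (∀ i, FaceIdxD m I i → ∀ j, t j + omegaD m i (σ⁻¹ j) = v i j) ∧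
          epsVec m t = γ) := by
  refine ⟨?_, ?_, ?_⟩
  · intro tx σx _ hso hwi
    exact part1lem hm I hIm tx σx hso hwi
  · intro t σ t' σ' ht hs ht' hs'
    exact part2lem hm I hI hIm t σ t' σ' ht hs ht' hs'
  · intro v γ hmem
    exact part3lem hm I hI hIm v γ hmem

end TypeD
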